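/- arXiv:1204.5883 — 3 statements merged into one kernel-verified Lean document; each statement's English description precedes it below -/
import Mathlib

section
/- There exists a constant C > 0 such that for all convex non-decreasing functions f₁, f₂ : [0,1] → ℝ whose right derivatives are bounded above by 1, the lengths of their graphs γ₁, γ₂ ⊂ ℝ² satisfy |ℋ¹(γ₁) − ℋ¹(γ₂)| ≤ C · sup_{x ∈ [0,1]} |f₁(x) − f₂(x)|. -/
open MeasureTheory Metric Set
open scoped ENNReal NNReal

noncomputable section

/-- `ℝ^d` as Euclidean space. -/
abbrev Pt (d : ℕ) := EuclideanSpace ℝ (Fin d)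

/-- `L` is an affine line in `ℝ^d`. -/
def IsLine {d : ℕ} (L : Set (Pt d)) : Prop :=
  ∃ a v : Pt d, v ≠ 0 ∧ L = {x | ∃ t : ℝ, x = a + t • v}

/-- A tube of width `w` is the closed `w`-neighborhood of an affine line. -/
def IsTube {d : ℕ} (w : ℝ) (T : Set (Pt d)) : Prop :=
  ∃ L : Set (Pt d), IsLine L ∧ T = Metric.cthickening w L

/-- `A ⊆ ℝ^d` is tube null: for every `δ > 0` it is covered by countably many
tubes `T j` of widths `w j` with `∑ j, (w j)^(d-1) ≤ δ`. -/
def TubeNull (d : ℕ) (A : Set (Pt d)) : Prop :=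
  ∀ δ : ℝ, 0 < δ → ∃ (T : ℕ → Set (Pt d)) (w : ℕ → ℝ),
    (∀ n, 0 < w n ∧ IsTube (w n) (T n)) ∧ (A ⊆ ⋃ n, T n) ∧
    ∑' n, ENNReal.ofReal (w n) ^ (d - 1) ≤ ENNReal.ofReal δ

/-- The Hausdorff measure associated to the gauge function `h`. -/
def gMeasure {d : ℕ} (h : ℝ → ℝ) : Measure (Pt d) :=
  Measure.mkMetric (fun r : ℝ≥0∞ => ENNReal.ofReal (h r.toReal))

/-- The graph of `f` over `s ⊆ ℝ`, as a subset of `ℝ²`. -/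
def curveGraph (f : ℝ → ℝ) (s : Set ℝ) : Set (Pt 2) :=
  (fun t => (WithLp.toLp 2 ![t, f t] : Pt 2)) '' s

open scoped RealInnerProductSpace in
lemma _dummy_open : True := trivial

open scoped RealInnerProductSpace

def mkp (a b : ℝ) : Pt 2 := WithLp.toLp 2 ![a, b]

@[simp] lemma mkp_zero (a b : ℝ) : mkp a b 0 = a := rfl
@[simp] lemma mkp_one (a b : ℝ) : mkp a b 1 = b := rfl

lemma pt2_ext (p : Pt 2) : mkp (p 0) (p 1) = p := by
  ext i; fin_cases i <;> rfl

lemma pt2_inner (p q : Pt 2) : ⟪p, q⟫ = p 0 * q 0 + p 1 * q 1 := by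
  rw [PiLp.inner_apply, Fin.sum_univ_two]
  simp [RCLike.inner_apply, mul_comm]

lemma pt2_sub_apply (p q : Pt 2) (i : Fin 2) : (p - q) i = p i - q i := rfl

lemma pt2_dist (a b c d : ℝ) :
    dist (mkp a b) (mkp c d) = Real.sqrt ((a - c)^2 + (b - d)^2) := by
  rw [EuclideanSpace.dist_eq, Fin.sum_univ_two]
  simp [mkp, Real.dist_eq, sq_abs]

lemma pt2_edist_snd (x a b : ℝ) : edist (mkp x a) (mkp x b) = edist a b := by
  rw [edist_dist, edist_dist, pt2_dist]
  simp [Real.dist_eq, Real.sqrt_sq_eq_abs]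

lemma edist_le_hausdorff {S : Set (Pt 2)} (hS : IsPreconnected S) {p q : Pt 2}
    (hp : p ∈ S) (hq : q ∈ S) : edist p q ≤ μH[1] S := by
  rcases eq_or_ne p q with rfl | hne
  · simp
  have hnorm : ‖q - p‖ ≠ 0 := by
    simpa [sub_eq_zero] using (Ne.symm hne)
  set v : Pt 2 := ‖q - p‖⁻¹ • (q - p) with hv
  set φ : Pt 2 → ℝ := fun x => ⟪v, x⟫ with hφ
  have hvnorm : ‖v‖ = 1 := by
    rw [hv, norm_smul, norm_inv, norm_norm, inv_mul_cancel₀ hnorm]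
  have hlip : LipschitzWith 1 φ := by
    refine LipschitzWith.of_dist_le_mul fun x y => ?_
    rw [NNReal.coe_one, one_mul, dist_eq_norm, dist_eq_norm, hφ]
    calc ‖⟪v, x⟫ - ⟪v, y⟫‖ = ‖⟪v, x - y⟫‖ := by rw [inner_sub_right]
    _ ≤ ‖v‖ * ‖x - y‖ := by
        rw [Real.norm_eq_abs]; exact abs_real_inner_le_norm v (x - y)
    _ = ‖x - y‖ := by rw [hvnorm, one_mul]
  have himg : μH[1] (φ '' S) ≤ μH[1] S := by
    have := hlip.hausdorffMeasure_image_le (zero_le_one) S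
    simpa using this
  have hconn : IsPreconnected (φ '' S) := hS.image φ hlip.continuous.continuousOn
  have hsub : Icc (φ p) (φ q) ⊆ φ '' S :=
    hconn.Icc_subset (mem_image_of_mem _ hp) (mem_image_of_mem _ hq)
  have hdiff : φ q - φ p = ‖q - p‖ := by
    rw [hφ]
    simp only [hv, real_inner_smul_left]
    rw [← mul_sub, ← inner_sub_right, real_inner_self_eq_norm_mul_norm]
    field_simp
  calc edist p q = ENNReal.ofReal (φ q - φ p) := by
        rw [hdiff, edist_dist, dist_eq_norm, norm_sub_rev]
  _ = volume (Icc (φ p) (φ q)) := by rw [Real.volume_Icc]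
  _ = μH[1] (Icc (φ p) (φ q)) := by rw [MeasureTheory.hausdorffMeasure_real]
  _ ≤ μH[1] (φ '' S) := measure_mono hsub
  _ ≤ μH[1] S := himg

lemma eVariationOn_le_congr_edist {E F : Type*} [PseudoEMetricSpace E] [PseudoEMetricSpace F]
    {f : ℝ → E} {g : ℝ → F} {s : Set ℝ}
    (h : ∀ x ∈ s, ∀ y ∈ s, edist (f x) (f y) = edist (g x) (g y)) :
    eVariationOn f s ≤ eVariationOn g s := by
  unfold eVariationOn
  refine iSup_le fun p => ?_
  obtain ⟨n, u, hu, us⟩ := p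
  have heq : ∀ i ∈ Finset.range n,
      edist (f (u (i+1))) (f (u i)) = edist (g (u (i+1))) (g (u i)) :=
    fun i _ => h _ (us _) _ (us _)
  rw [Finset.sum_congr rfl heq]
  exact eVariationOn.sum_le (f := g) (n := n) hu us

lemma eVariationOn_congr_edist {E F : Type*} [PseudoEMetricSpace E] [PseudoEMetricSpace F]
    {f : ℝ → E} {g : ℝ → F} {s : Set ℝ}
    (h : ∀ x ∈ s, ∀ y ∈ s, edist (f x) (f y) = edist (g x) (g y)) :
    eVariationOn f s = eVariationOn g s :=
  le_antisymm (eVariationOn_le_congr_edist h)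
    (eVariationOn_le_congr_edist fun x hx y hy => (h x hx y hy).symm)

lemma measure_union_singleton_eq (A : Set (Pt 2)) (p : Pt 2) :
    μH[1] (A ∪ {p}) = μH[1] A := by
  haveI : NullSingletonClass (μH[1] : Measure (Pt 2)) := Measure.nullSingletonClass_hausdorff _ one_pos
  refine le_antisymm ?_ (measure_mono subset_union_left)
  refine (measure_union_le A {p}).trans ?_
  simp

lemma eVariationOn_le_hausdorff {g : ℝ → Pt 2} {a b : ℝ}
    (hcont : ContinuousOn g (Icc a b)) (hinj : InjOn g (Icc a b)) :
    eVariationOn g (Icc a b) ≤ μH[1] (g '' Icc a b) := by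
  unfold eVariationOn
  refine iSup_le fun p => ?_
  obtain ⟨n, u, hu, us⟩ := p
  have hsub : ∀ i : ℕ, Icc (u i) (u (i+1)) ⊆ Icc a b :=
    fun i => Icc_subset_Icc (us i).1 (us (i+1)).2
  set A : ℕ → Set (Pt 2) := fun i => g '' Ico (u i) (u (i+1)) with hA
  have hAeq : ∀ i, A i = (g '' Icc (u i) (u (i+1))) \ {g (u (i+1))} := by
    intro i
    ext x
    constructor
    · rintro ⟨t, ht, rfl⟩
      refine ⟨⟨t, ⟨ht.1, ht.2.le⟩, rfl⟩, ?_⟩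
      simp only [mem_singleton_iff]
      intro hgt
      have : t = u (i+1) := hinj (hsub i ⟨ht.1, ht.2.le⟩) (us (i+1)) hgt
      exact absurd this ht.2.ne
    · rintro ⟨⟨t, ht, rfl⟩, hne⟩
      refine ⟨t, ⟨ht.1, lt_of_le_of_ne ht.2 ?_⟩, rfl⟩
      intro h
      exact hne (by rw [h]; exact rfl)
  have hAmeas : ∀ i, MeasurableSet (A i) := by
    intro i
    rw [hAeq i]
    exact ((isCompact_Icc.image_of_continuousOn
      (hcont.mono (hsub i))).isClosed.measurableSet).diff (measurableSet_singleton _)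
  have hdisj : (↑(Finset.range n) : Set ℕ).PairwiseDisjoint A := by
    intro i _ j _ hij
    have key : ∀ i j : ℕ, i < j → Disjoint (A i) (A j) := by
      intro i j hij
      rw [Set.disjoint_left]
      rintro x ⟨s, hs, rfl⟩ ⟨t, ht, hgt⟩
      have hst : s = t := hinj (hsub i ⟨hs.1, hs.2.le⟩) (hsub j ⟨ht.1, ht.2.le⟩) hgt.symm
      have h1 : u (i+1) ≤ u j := hu (Nat.succ_le_of_lt hij)
      have := hs.2
      rw [hst] at this
      exact absurd (this.trans_le (h1.trans ht.1)) (lt_irrefl t)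
    rcases lt_or_gt_of_ne hij with h | h
    · exact key _ _ h
    · exact (key _ _ h).symm
  have hkey : ∀ i, edist (g (u (i+1))) (g (u i)) ≤ μH[1] (A i) := by
    intro i
    rcases eq_or_lt_of_le (hu (Nat.le_succ i)) with heq | hlt
    · rw [← heq]; simp
    · have hconn : IsPreconnected (g '' Icc (u i) (u (i+1))) :=
        isPreconnected_Icc.image g (hcont.mono (hsub i))
      have h1 : edist (g (u (i+1))) (g (u i)) ≤ μH[1] (g '' Icc (u i) (u (i+1))) :=
        edist_le_hausdorff hconn (mem_image_of_mem g ⟨hlt.le, le_rfl⟩)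
          (mem_image_of_mem g ⟨le_rfl, hlt.le⟩)
      refine h1.trans ?_
      have : g '' Icc (u i) (u (i+1)) = A i ∪ {g (u (i+1))} := by
        rw [hAeq i]
        rw [diff_union_self]
        rw [union_eq_self_of_subset_right]
        rintro x (rfl : x = g (u (i+1)))
        exact ⟨u (i+1), ⟨hlt.le, le_rfl⟩, rfl⟩
      rw [this, measure_union_singleton_eq]
  calc ∑ i ∈ Finset.range n, edist (g (u (i+1))) (g (u i))
      ≤ ∑ i ∈ Finset.range n, μH[1] (A i) := Finset.sum_le_sum fun i _ => hkey i
  _ = μH[1] (⋃ i ∈ Finset.range n, A i) :=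
      (measure_biUnion_finset hdisj fun i _ => hAmeas i).symm
  _ ≤ μH[1] (g '' Icc a b) := by
      refine measure_mono ?_
      refine iUnion₂_subset fun i _ => ?_
      exact image_mono ((Ico_subset_Icc_self).trans (hsub i))

lemma hausdorff_le_eVariationOn {g : ℝ → Pt 2}
    (hfin : eVariationOn g (Icc 0 1) ≠ ⊤) :
    μH[1] (g '' Icc (0:ℝ) 1) ≤ eVariationOn g (Icc 0 1) := by
  set s : Set ℝ := Icc (0:ℝ) 1 with hs
  have h0 : (0:ℝ) ∈ s := ⟨le_rfl, zero_le_one⟩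
  have hlbv : LocallyBoundedVariationOn g s := by
    intro x y _ _
    exact ne_top_of_le_ne_top hfin (eVariationOn.mono g inter_subset_left)
  set ν : ℝ → ℝ := variationOnFromTo g s 0 with hν
  set φ : ℝ → Pt 2 := naturalParameterization g s 0 with hφ
  have himg : g '' s = φ '' (ν '' s) := by
    rw [← image_comp]
    refine (image_congr fun t ht => ?_).symm
    have := edist_naturalParameterization_eq_zero hlbv h0 ht
    rw [edist_eq_zero] at this
    exact this
  have hunit := has_unit_speed_naturalParameterization g hlbv h0
  have hlip : LipschitzOnWith 1 φ (ν '' s) := by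
    intro x hx y hy
    rcases le_total x y with hxy | hxy
    · calc edist (φ x) (φ y) ≤ eVariationOn φ (ν '' s ∩ Icc x y) :=
            eVariationOn.edist_le φ ⟨hx, le_rfl, hxy⟩ ⟨hy, hxy, le_rfl⟩
      _ = ENNReal.ofReal (1 * (y - x)) := hunit hx hy
      _ ≤ 1 * edist x y := by
          rw [one_mul, one_mul, edist_dist, Real.dist_eq, abs_sub_comm,
            abs_of_nonneg (sub_nonneg.2 hxy)]
    · calc edist (φ x) (φ y) = edist (φ y) (φ x) := edist_comm _ _
      _ ≤ eVariationOn φ (ν '' s ∩ Icc y x) :=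
            eVariationOn.edist_le φ ⟨hy, le_rfl, hxy⟩ ⟨hx, hxy, le_rfl⟩
      _ = ENNReal.ofReal (1 * (x - y)) := hunit hy hx
      _ ≤ 1 * edist x y := by
          rw [one_mul, one_mul, edist_dist, Real.dist_eq,
            abs_of_nonneg (sub_nonneg.2 hxy)]
  have hsubI : ν '' s ⊆ Icc 0 ((eVariationOn g s).toReal) := by
    rintro _ ⟨t, ht, rfl⟩
    refine ⟨variationOnFromTo.nonneg_of_le g s ht.1, ?_⟩
    show variationOnFromTo g s 0 t ≤ _
    rw [variationOnFromTo.eq_of_le g s ht.1]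
    exact ENNReal.toReal_mono hfin (eVariationOn.mono g inter_subset_left)
  calc μH[1] (g '' s) = μH[1] (φ '' (ν '' s)) := by rw [himg]
  _ ≤ 1 * μH[1] (ν '' s) := by
      have := hlip.hausdorffMeasure_image_le zero_le_one
      simpa using this
  _ ≤ μH[1] (Icc (0:ℝ) ((eVariationOn g s).toReal)) := by
      rw [one_mul]; exact measure_mono hsubI
  _ = ENNReal.ofReal ((eVariationOn g s).toReal) := by
      rw [MeasureTheory.hausdorffMeasure_real, Real.volume_Icc, sub_zero]
  _ ≤ eVariationOn g s := ENNReal.ofReal_toReal_le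

section Projection

variable {K : Set (Pt 2)}

lemma exists_proj (hne : K.Nonempty) (hcl : IsClosed K) (hconv : Convex ℝ K) (u : Pt 2) :
    ∃ v, v ∈ K ∧ (∀ w ∈ K, ⟪u - v, w - v⟫ ≤ 0) ∧ (∀ w ∈ K, dist u v ≤ dist u w) := by
  obtain ⟨v, hvK, hmin⟩ :=
    exists_norm_eq_iInf_of_complete_convex hne (hcl.isComplete) hconv u
  refine ⟨v, hvK, (norm_eq_iInf_iff_real_inner_le_zero hconv hvK).mp hmin, ?_⟩
  intro w hw
  haveI : Nonempty K := hne.to_subtype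
  rw [dist_eq_norm, dist_eq_norm, hmin]
  exact ciInf_le ⟨0, Set.forall_mem_range.2 fun _ => norm_nonneg _⟩ (⟨w, hw⟩ : K)

lemma proj_nonexpansive {P : Pt 2 → Pt 2}
    (hPK : ∀ u, P u ∈ K) (hPvar : ∀ u, ∀ w ∈ K, ⟪u - P u, w - P u⟫ ≤ 0) :
    LipschitzWith 1 P := by
  refine LipschitzWith.of_dist_le_mul fun x y => ?_
  rw [NNReal.coe_one, one_mul]
  set va := P x with hva
  set vb := P y with hvb
  have h1 : ⟪x - va, vb - va⟫ ≤ 0 := hPvar x vb (hPK y)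
  have h2 : ⟪y - vb, va - vb⟫ ≤ 0 := hPvar y va (hPK x)
  have h2' : ⟪vb - y, vb - va⟫ ≤ 0 := by
    have : ⟪vb - y, vb - va⟫ = ⟪y - vb, va - vb⟫ := by
      rw [← neg_sub y vb, ← neg_sub va vb, inner_neg_neg]
    rw [this]; exact h2
  have hsum : ⟪x - y, vb - va⟫ + ⟪vb - va, vb - va⟫ ≤ 0 := by
    have : (x - va) + (vb - y) = (x - y) + (vb - va) := by abel
    calc ⟪x - y, vb - va⟫ + ⟪vb - va, vb - va⟫
        = ⟪(x - y) + (vb - va), vb - va⟫ := (inner_add_left _ _ _).symm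
    _ = ⟪(x - va) + (vb - y), vb - va⟫ := by rw [← this]
    _ = ⟪x - va, vb - va⟫ + ⟪vb - y, vb - va⟫ := inner_add_left _ _ _
    _ ≤ 0 := add_nonpos h1 h2'
  have hnorm : ‖vb - va‖ ^ 2 ≤ ‖y - x‖ * ‖vb - va‖ := by
    have h3 : ⟪vb - va, vb - va⟫ ≤ ⟪y - x, vb - va⟫ := by
      have : ⟪y - x, vb - va⟫ = - ⟪x - y, vb - va⟫ := by
        rw [← inner_neg_left, neg_sub]
      linarith
    calc ‖vb - va‖ ^ 2 = ⟪vb - va, vb - va⟫ := (real_inner_self_eq_norm_sq _).symm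
    _ ≤ ⟪y - x, vb - va⟫ := h3
    _ ≤ ‖y - x‖ * ‖vb - va‖ := real_inner_le_norm _ _
  have : ‖vb - va‖ ≤ ‖y - x‖ := by
    rcases eq_or_lt_of_le (norm_nonneg (vb - va)) with h0 | h0
    · rw [← h0]; exact norm_nonneg _
    · nlinarith [hnorm]
  calc dist (P x) (P y) = ‖vb - va‖ := by rw [dist_eq_norm, norm_sub_rev]
  _ ≤ ‖y - x‖ := this
  _ = dist x y := by rw [← dist_eq_norm, dist_comm]

end Projection

lemma cont_mkp {f g : ℝ → ℝ} (hf : Continuous f) (hg : Continuous g) :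
    Continuous fun s => mkp (f s) (g s) := by
  have h : (fun s => mkp (f s) (g s)) =
      (PiLp.continuousLinearEquiv 2 ℝ (fun _ : Fin 2 => ℝ)).symm ∘ (fun s i => ![f s, g s] i) :=
    rfl
  rw [h]
  refine (PiLp.continuousLinearEquiv 2 ℝ (fun _ : Fin 2 => ℝ)).symm.continuous.comp ?_
  apply continuous_pi
  intro i
  fin_cases i
  · exact hf
  · exact hg

lemma cont_eval (i : Fin 2) : Continuous fun p : Pt 2 => p i :=
  (continuous_apply i).comp (PiLp.continuousLinearEquiv 2 ℝ (fun _ : Fin 2 => ℝ)).continuous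

lemma eVariationOn_vert_le {x0 : ℝ} {h : ℝ → ℝ} {a b : ℝ}
    (hm : MonotoneOn h (Icc a b)) (hab : a ≤ b) :
    eVariationOn (fun s => mkp x0 (h s)) (Icc a b) ≤ ENNReal.ofReal (h b - h a) := by
  rw [eVariationOn_congr_edist (g := h) (fun p _ q _ => pt2_edist_snd _ _ _)]
  have := hm.eVariationOn_le (⟨le_rfl, hab⟩ : a ∈ Icc a b) ⟨hab, le_rfl⟩
  rwa [inter_self] at this

lemma eVariationOn_vert_le' {x0 : ℝ} {h : ℝ → ℝ} {a b : ℝ}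
    (hm : AntitoneOn h (Icc a b)) (hab : a ≤ b) :
    eVariationOn (fun s => mkp x0 (h s)) (Icc a b) ≤ ENNReal.ofReal (h a - h b) := by
  rw [eVariationOn_congr_edist (g := fun s => -h s)
    (fun p _ q _ => by rw [pt2_edist_snd]; exact (edist_neg_neg _ _).symm)]
  have h2 : MonotoneOn (fun s => -h s) (Icc a b) := fun x hx y hy hxy => by
    simpa using hm hx hy hxy
  have := h2.eVariationOn_le (⟨le_rfl, hab⟩ : a ∈ Icc a b) ⟨hab, le_rfl⟩
  rw [inter_self] at this
  refine this.trans (le_of_eq ?_)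
  congr 1
  ring

lemma key_ineq {φ ψ : ℝ → ℝ}
    (hφc : ContinuousOn φ (Icc 0 1))
    (hle : ∀ x ∈ Icc (0:ℝ) 1, φ x ≤ ψ x)
    (hψm : MonotoneOn ψ (Icc 0 1))
    (hψcc : ContinuousOn ψ (Icc 0 1))
    (hψcv : ConvexOn ℝ (Icc 0 1) ψ) :
    eVariationOn (fun t => mkp t (ψ t)) (Icc 0 1) ≤
      eVariationOn (fun t => mkp t (φ t)) (Icc 0 1)
      + ENNReal.ofReal (ψ 0 - φ 0) + ENNReal.ofReal (ψ 1 - φ 1) := by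
  have h01 : (0:ℝ) ∈ Icc (0:ℝ) 1 := ⟨le_rfl, zero_le_one⟩
  have h11 : (1:ℝ) ∈ Icc (0:ℝ) 1 := ⟨zero_le_one, le_rfl⟩
  have hd0 : 0 ≤ ψ 0 - φ 0 := sub_nonneg.2 (hle 0 h01)
  have hd1 : 0 ≤ ψ 1 - φ 1 := sub_nonneg.2 (hle 1 h11)
  -- clamp
  set c : ℝ → ℝ := fun s => max 0 (min 1 s) with hc
  have hc_mem : ∀ s, c s ∈ Icc (0:ℝ) 1 :=
    fun s => ⟨le_max_left _ _, max_le zero_le_one (min_le_left _ _)⟩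
  have hc_eq : ∀ s ∈ Icc (0:ℝ) 1, c s = s := fun s hs => by
    rw [hc]; dsimp only; rw [min_eq_right hs.2, max_eq_right hs.1]
  have hc_mono : Monotone c := fun x y h =>
    max_le_max le_rfl (min_le_min le_rfl h)
  have hc_cont : Continuous c := continuous_const.max (continuous_const.min continuous_id)
  set Ψ : ℝ → ℝ := fun s => ψ (c s) with hΨ
  have hΨc : Continuous Ψ := hψcc.comp_continuous hc_cont hc_mem
  have hΨm : Monotone Ψ := fun x y h => hψm (hc_mem x) (hc_mem y) (hc_mono h)
  have hΨeq : ∀ s ∈ Icc (0:ℝ) 1, Ψ s = ψ s := fun s hs => by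
    rw [hΨ]; dsimp only; rw [hc_eq s hs]
  -- the epigraph
  set K : Set (Pt 2) := {p : Pt 2 | p 0 ∈ Icc (0:ℝ) 1 ∧ Ψ (p 0) ≤ p 1} with hK
  have hKcl : IsClosed K := by
    refine IsClosed.inter (isClosed_Icc.preimage (cont_eval 0)) ?_
    exact isClosed_le (hΨc.comp (cont_eval 0)) (cont_eval 1)
  have hKconv : Convex ℝ K := by
    rintro p ⟨hp0, hp1⟩ q ⟨hq0, hq1⟩ a b ha hb hab
    have e0 : (a • p + b • q) 0 = a * p 0 + b * q 0 := rfl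
    have e1 : (a • p + b • q) 1 = a * p 1 + b * q 1 := rfl
    have hcomb : a * p 0 + b * q 0 ∈ Icc (0:ℝ) 1 := by
      have := convex_Icc (0:ℝ) 1 hp0 hq0 ha hb hab
      simpa using this
    constructor
    · show (a • p + b • q) 0 ∈ Icc (0:ℝ) 1
      rw [e0]; exact hcomb
    · show Ψ ((a • p + b • q) 0) ≤ (a • p + b • q) 1
      rw [e0, e1, hΨeq _ hcomb]
      have hcv := hψcv.2 hp0 hq0 ha hb hab
      simp only [smul_eq_mul] at hcv
      calc ψ (a * p 0 + b * q 0) ≤ a * ψ (p 0) + b * ψ (q 0) := hcv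
      _ = a * Ψ (p 0) + b * Ψ (q 0) := by rw [hΨeq _ hp0, hΨeq _ hq0]
      _ ≤ a * p 1 + b * q 1 :=
          add_le_add (mul_le_mul_of_nonneg_left hp1 ha) (mul_le_mul_of_nonneg_left hq1 hb)
  have hKne : K.Nonempty := by
    refine ⟨mkp 0 (ψ 0), ⟨?_, ?_⟩⟩
    · rw [mkp_zero]; exact h01
    · rw [mkp_zero, mkp_one, hΨeq 0 h01]
  -- the projection
  obtain ⟨P, hPK, hPvar, hPmin⟩ :
      ∃ P : Pt 2 → Pt 2, (∀ u, P u ∈ K) ∧ (∀ u, ∀ w ∈ K, ⟪u - P u, w - P u⟫ ≤ 0) ∧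
        (∀ u, ∀ w ∈ K, dist u (P u) ≤ dist u w) := by
    choose P h1 h2 h3 using exists_proj hKne hKcl hKconv
    exact ⟨P, h1, h2, h3⟩
  have hPfix : ∀ p ∈ K, P p = p := by
    intro p hp
    have := hPmin p p hp
    rw [dist_self] at this
    exact (dist_eq_zero.mp (le_antisymm this dist_nonneg)).symm
  have hPlip : LipschitzWith 1 P := proj_nonexpansive hPK hPvar
  -- projections of points below the graph land on the graph
  have hPgraph : ∀ p : Pt 2, p 0 ∈ Icc (0:ℝ) 1 → p 1 ≤ Ψ (p 0) →
      (P p) 1 = Ψ ((P p) 0) := by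
    intro p hp0 hp1
    obtain ⟨hq0, hq1⟩ := hPK p
    by_contra hne
    have hlt : Ψ ((P p) 0) < (P p) 1 := lt_of_le_of_ne hq1 (Ne.symm hne)
    set q := P p with hq
    -- first witness
    have hw1 : mkp (q 0) (Ψ (q 0)) ∈ K := by
      constructor
      · rw [mkp_zero]; exact hq0
      · rw [mkp_zero, mkp_one]
    have hv1 := hPvar p _ hw1
    rw [pt2_inner] at hv1
    rw [pt2_sub_apply, pt2_sub_apply, pt2_sub_apply, pt2_sub_apply, mkp_zero, mkp_one] at hv1
    -- hv1 : (p 0 - q 0) * (q 0 - q 0) + (p 1 - q 1) * (Ψ (q 0) - q 1) ≤ 0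
    have hp1q1 : q 1 ≤ p 1 := by nlinarith
    have hΨlt : Ψ (q 0) < Ψ (p 0) := lt_of_lt_of_le (lt_of_lt_of_le hlt hp1q1) hp1
    have hq0p0 : q 0 < p 0 := by
      by_contra hcon
      exact absurd (hΨm (not_lt.mp hcon)) (not_le.mpr hΨlt)
    -- second witness
    have hw2 : mkp (p 0) (Ψ (p 0)) ∈ K := by
      constructor
      · rw [mkp_zero]; exact hp0
      · rw [mkp_zero, mkp_one]
    have hv2 := hPvar p _ hw2
    rw [pt2_inner] at hv2
    rw [pt2_sub_apply, pt2_sub_apply, pt2_sub_apply, pt2_sub_apply, mkp_zero, mkp_one] at hv2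
    -- hv2 : (p 0 - q 0) * (p 0 - q 0) + (p 1 - q 1) * (Ψ (p 0) - q 1) ≤ 0
    have hΨp : q 1 ≤ Ψ (p 0) := hp1q1.trans hp1
    nlinarith
  -- the curve Γ'
  set Γ : ℝ → Pt 2 := fun s =>
    mkp (c s) (φ (c s) + (max 0 (-s)) * (ψ 0 - φ 0) + (max 0 (s - 1)) * (ψ 1 - φ 1)) with hΓ
  have hΓcont : Continuous Γ := by
    refine cont_mkp hc_cont ?_
    refine Continuous.add (Continuous.add (hφc.comp_continuous hc_cont hc_mem) ?_) ?_
    · exact (continuous_const.max continuous_id.neg).mul continuous_const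
    · exact (continuous_const.max (continuous_id.sub continuous_const)).mul continuous_const
  have hΓmem : ∀ s ∈ Icc (-1:ℝ) 2, (Γ s) 0 ∈ Icc (0:ℝ) 1 ∧ (Γ s) 1 ≤ Ψ ((Γ s) 0) := by
    intro s hs
    refine ⟨hc_mem s, ?_⟩
    rw [hΓ]; dsimp only
    rw [mkp_zero, mkp_one]
    rcases le_or_gt s 0 with hs0 | hs0
    · have hcs : c s = 0 := by
        rw [hc]; dsimp only; rw [min_eq_right (hs0.trans zero_le_one), max_eq_left hs0]
      have hm1 : max 0 (-s) = -s := max_eq_right (by linarith)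
      have hm2 : max 0 (s - 1) = 0 := max_eq_left (by linarith)
      rw [hcs, hm1, hm2, hΨeq 0 h01]
      have hsge : -s ≤ 1 := by linarith [hs.1]
      nlinarith
    · rcases le_or_gt s 1 with hs1 | hs1
      · have hcs : c s = s := hc_eq s ⟨hs0.le, hs1⟩
        have hm1 : max 0 (-s) = 0 := max_eq_left (by linarith)
        have hm2 : max 0 (s - 1) = 0 := max_eq_left (by linarith)
        rw [hcs, hm1, hm2, hΨeq s ⟨hs0.le, hs1⟩]
        have := hle s ⟨hs0.le, hs1⟩
        linarith
      · have hcs : c s = 1 := by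
          rw [hc]; dsimp only
          rw [min_eq_left hs1.le, max_eq_right zero_le_one]
        have hm1 : max 0 (-s) = 0 := max_eq_left (by linarith)
        have hm2 : max 0 (s - 1) = s - 1 := max_eq_right (by linarith)
        rw [hcs, hm1, hm2, hΨeq 1 h11]
        have hsle : s - 1 ≤ 1 := by linarith [hs.2]
        nlinarith
  -- endpoints
  have hΓm1 : Γ (-1) = mkp 0 (ψ 0) := by
    rw [hΓ]; dsimp only
    have hcs : c (-1) = 0 := by
      rw [hc]; dsimp only; norm_num
    rw [hcs]
    congr 1
    norm_num
  have hΓ2 : Γ 2 = mkp 1 (ψ 1) := by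
    rw [hΓ]; dsimp only
    have hcs : c 2 = 1 := by
      rw [hc]; dsimp only; norm_num
    rw [hcs]
    congr 1
    norm_num
  set ξ : ℝ → ℝ := fun s => (P (Γ s)) 0 with hξ
  have hξc : Continuous ξ := (cont_eval 0).comp (hPlip.continuous.comp hΓcont)
  have hξm1 : ξ (-1) = 0 := by
    rw [hξ]; dsimp only
    rw [hΓm1, hPfix _ (by exact ⟨by rw [mkp_zero]; exact h01,
      by rw [mkp_zero, mkp_one, hΨeq 0 h01]⟩), mkp_zero]
  have hξ2 : ξ 2 = 1 := by
    rw [hξ]; dsimp only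
    rw [hΓ2, hPfix _ (by exact ⟨by rw [mkp_zero]; exact h11,
      by rw [mkp_zero, mkp_one, hΨeq 1 h11]⟩), mkp_zero]
  -- step 1 : variation of the ψ graph is at most that of P ∘ Γ
  have step1 : eVariationOn (fun t => mkp t (ψ t)) (Icc 0 1) ≤
      eVariationOn (P ∘ Γ) (Icc (-1) 2) := by
    unfold eVariationOn
    refine iSup_le fun p => ?_
    obtain ⟨n, u, hu, us⟩ := p
    set A : ℕ → Set ℝ := fun i => Icc (-1:ℝ) 2 ∩ ξ ⁻¹' {u i} with hA
    have hAne : ∀ i, (A i).Nonempty := by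
      intro i
      have h1 : u i ∈ Icc (ξ (-1)) (ξ 2) := by rw [hξm1, hξ2]; exact us i
      obtain ⟨x, hx, hξx⟩ := intermediate_value_Icc (by norm_num : (-1:ℝ) ≤ 2)
        hξc.continuousOn h1
      exact ⟨x, hx, hξx⟩
    have hAcl : ∀ i, IsClosed (A i) := fun i =>
      isClosed_Icc.inter (isClosed_singleton.preimage hξc)
    have hAbdd : ∀ i, BddBelow (A i) := fun i =>
      (bddBelow_Icc).mono inter_subset_left
    set t : ℕ → ℝ := fun i => sInf (A i) with ht
    have htmem : ∀ i, t i ∈ A i := fun i => (hAcl i).csInf_mem (hAne i) (hAbdd i)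
    have htmono : Monotone t := by
      intro i j hij
      refine le_csInf (hAne j) fun x hx => ?_
      have h1 : u i ∈ Icc (ξ (-1)) (ξ x) := by
        rw [hξm1]
        exact ⟨(us i).1, (hu hij).trans_eq hx.2.symm⟩
      obtain ⟨y, hy, hξy⟩ := intermediate_value_Icc hx.1.1 hξc.continuousOn h1
      have hyA : y ∈ A i := ⟨⟨hy.1, hy.2.trans hx.1.2⟩, hξy⟩
      exact (csInf_le (hAbdd i) hyA).trans hy.2
    have hPt : ∀ i, (P ∘ Γ) (t i) = mkp (u i) (ψ (u i)) := by
      intro i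
      have hmem := hΓmem (t i) (htmem i).1
      have hgr := hPgraph (Γ (t i)) hmem.1 hmem.2
      have h0 : (P (Γ (t i))) 0 = u i := (htmem i).2
      have h1 : (P (Γ (t i))) 1 = ψ (u i) := by
        rw [hgr, h0, hΨeq _ (us i)]
      calc (P ∘ Γ) (t i) = mkp ((P (Γ (t i))) 0) ((P (Γ (t i))) 1) := (pt2_ext _).symm
      _ = mkp (u i) (ψ (u i)) := by rw [h0, h1]
    have heq : ∀ i ∈ Finset.range n,
        edist (mkp (u (i+1)) (ψ (u (i+1)))) (mkp (u i) (ψ (u i)))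
          = edist ((P ∘ Γ) (t (i+1))) ((P ∘ Γ) (t i)) := by
      intro i _
      rw [hPt, hPt]
    rw [Finset.sum_congr rfl heq]
    exact eVariationOn.sum_le (n := n) htmono fun i => (htmem i).1
  -- step 2 : Lipschitz projection
  have step2 : eVariationOn (P ∘ Γ) (Icc (-1:ℝ) 2) ≤ eVariationOn Γ (Icc (-1:ℝ) 2) := by
    have := (hPlip.lipschitzOnWith (s := univ)).comp_eVariationOn_le
      (mapsTo_univ Γ (Icc (-1:ℝ) 2))
    simpa using this
  -- step 3 : split the interval
  have e1 : Icc (-1:ℝ) 2 ∩ Icc (-1:ℝ) 0 = Icc (-1:ℝ) 0 :=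
    inter_eq_self_of_subset_right (Icc_subset_Icc le_rfl (by norm_num))
  have e2 : Icc (-1:ℝ) 2 ∩ Icc (0:ℝ) 1 = Icc (0:ℝ) 1 :=
    inter_eq_self_of_subset_right (Icc_subset_Icc (by norm_num) (by norm_num))
  have e3 : Icc (-1:ℝ) 2 ∩ Icc (1:ℝ) 2 = Icc (1:ℝ) 2 :=
    inter_eq_self_of_subset_right (Icc_subset_Icc (by norm_num) le_rfl)
  have e4 : Icc (-1:ℝ) 2 ∩ Icc (-1:ℝ) 2 = Icc (-1:ℝ) 2 := inter_self _
  have e5 : Icc (-1:ℝ) 2 ∩ Icc (0:ℝ) 2 = Icc (0:ℝ) 2 :=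
    inter_eq_self_of_subset_right (Icc_subset_Icc (by norm_num) le_rfl)
  have hsplit1 := eVariationOn.Icc_add_Icc Γ (s := Icc (-1:ℝ) 2)
    (a := -1) (b := 0) (c := 2) (by norm_num) (by norm_num) ⟨by norm_num, by norm_num⟩
  have hsplit2 := eVariationOn.Icc_add_Icc Γ (s := Icc (-1:ℝ) 2)
    (a := 0) (b := 1) (c := 2) (by norm_num) (by norm_num) ⟨by norm_num, by norm_num⟩
  rw [e1, e4, e5] at hsplit1
  rw [e2, e3, e5] at hsplit2
  -- step 4 : the middle piece is the φ graph
  have step4 : eVariationOn Γ (Icc (0:ℝ) 1) = eVariationOn (fun t => mkp t (φ t)) (Icc 0 1) := by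
    refine eVariationOn.eq_of_eqOn fun s hs => ?_
    rw [hΓ]; dsimp only
    have hm1 : max 0 (-s) = 0 := max_eq_left (by linarith [hs.1])
    have hm2 : max 0 (s - 1) = 0 := max_eq_left (by linarith [hs.2])
    rw [hc_eq s hs, hm1, hm2]
    congr 1
    ring
  -- step 5 : left piece
  have step5 : eVariationOn Γ (Icc (-1:ℝ) 0) ≤ ENNReal.ofReal (ψ 0 - φ 0) := by
    have heqon : EqOn Γ (fun s => mkp 0 (φ 0 + (-s) * (ψ 0 - φ 0))) (Icc (-1:ℝ) 0) := by
      intro s hs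
      rw [hΓ]; dsimp only
      have hcs : c s = 0 := by
        rw [hc]; dsimp only
        rw [min_eq_right (hs.2.trans zero_le_one), max_eq_left hs.2]
      have hm1 : max 0 (-s) = -s := max_eq_right (by linarith [hs.2])
      have hm2 : max 0 (s - 1) = 0 := max_eq_left (by linarith [hs.2])
      rw [hcs, hm1, hm2]
      congr 1
      ring
    rw [eVariationOn.eq_of_eqOn heqon]
    have hanti : AntitoneOn (fun s => φ 0 + (-s) * (ψ 0 - φ 0)) (Icc (-1:ℝ) 0) := by
      intro x _ y _ hxy
      dsimp only
      nlinarith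
    have := eVariationOn_vert_le' (x0 := 0) hanti (by norm_num : (-1:ℝ) ≤ 0)
    refine this.trans (le_of_eq ?_)
    congr 1
    ring
  -- step 6 : right piece
  have step6 : eVariationOn Γ (Icc (1:ℝ) 2) ≤ ENNReal.ofReal (ψ 1 - φ 1) := by
    have heqon : EqOn Γ (fun s => mkp 1 (φ 1 + (s - 1) * (ψ 1 - φ 1))) (Icc (1:ℝ) 2) := by
      intro s hs
      rw [hΓ]; dsimp only
      have hcs : c s = 1 := by
        rw [hc]; dsimp only
        rw [min_eq_left hs.1, max_eq_right zero_le_one]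
      have hm1 : max 0 (-s) = 0 := max_eq_left (by linarith [hs.1])
      have hm2 : max 0 (s - 1) = s - 1 := max_eq_right (by linarith [hs.1])
      rw [hcs, hm1, hm2]
      congr 1
      ring
    rw [eVariationOn.eq_of_eqOn heqon]
    have hmono : MonotoneOn (fun s => φ 1 + (s - 1) * (ψ 1 - φ 1)) (Icc (1:ℝ) 2) := by
      intro x _ y _ hxy
      dsimp only
      nlinarith
    have := eVariationOn_vert_le (x0 := 1) hmono (by norm_num : (1:ℝ) ≤ 2)
    refine this.trans (le_of_eq ?_)
    congr 1
    ring
  -- combine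
  calc eVariationOn (fun t => mkp t (ψ t)) (Icc 0 1)
      ≤ eVariationOn (P ∘ Γ) (Icc (-1) 2) := step1
  _ ≤ eVariationOn Γ (Icc (-1:ℝ) 2) := step2
  _ = eVariationOn Γ (Icc (-1:ℝ) 0) + (eVariationOn Γ (Icc (0:ℝ) 1)
        + eVariationOn Γ (Icc (1:ℝ) 2)) := by rw [← hsplit1, ← hsplit2]
  _ ≤ ENNReal.ofReal (ψ 0 - φ 0) + (eVariationOn (fun t => mkp t (φ t)) (Icc 0 1)
        + ENNReal.ofReal (ψ 1 - φ 1)) := by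
      rw [step4] at *
      exact add_le_add step5 (add_le_add le_rfl step6)
  _ = eVariationOn (fun t => mkp t (φ t)) (Icc 0 1)
        + ENNReal.ofReal (ψ 0 - φ 0) + ENNReal.ofReal (ψ 1 - φ 1) := by
      rw [← add_assoc, add_comm (ENNReal.ofReal (ψ 0 - φ 0)), add_assoc]

lemma slope_le_one {f : ℝ → ℝ} (hcv : ConvexOn ℝ (Icc 0 1) f) (hm : MonotoneOn f (Icc 0 1))
    (hd : ∀ t ∈ Ico (0:ℝ) 1, derivWithin f (Ioi t) t ≤ 1)
    {x y : ℝ} (hx : 0 ≤ x) (hxy : x < y) (hy : y < 1) : f y - f x ≤ y - x := by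
  have hy0 : (0:ℝ) ≤ y := hx.trans hxy.le
  have hyI : y ∈ Icc (0:ℝ) 1 := ⟨hy0, hy.le⟩
  have hxI : x ∈ Icc (0:ℝ) 1 := ⟨hx, hxy.le.trans hy.le⟩
  have hne : (Ioo y 1).Nonempty := ⟨(y+1)/2, by constructor <;> linarith⟩
  have hmono : MonotoneOn (slope f y) (Ioo y 1) := by
    refine (hcv.slope_mono hyI).mono fun z hz => ?_
    exact ⟨⟨by linarith [hz.1], hz.2.le⟩, by simp [hz.1.ne']⟩
  have hbdd : BddBelow (slope f y '' Ioo y 1) := by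
    refine ⟨0, ?_⟩
    rintro _ ⟨z, hz, rfl⟩
    rw [slope_def_field]
    have h1 : f y ≤ f z := hm hyI ⟨by linarith [hz.1], hz.2.le⟩ hz.1.le
    have h2 : (0:ℝ) < z - y := by linarith [hz.1]
    exact div_nonneg (by linarith) h2.le
  set d := sInf (slope f y '' Ioo y 1) with hdd
  have htend : Filter.Tendsto (slope f y) (nhdsWithin y (Ioi y)) (nhds d) := by
    have h := MonotoneOn.tendsto_nhdsWithin_Ioo_right hne hmono hbdd
    exact h
  have hder : HasDerivWithinAt f d (Ioi y) y := by
    rw [hasDerivWithinAt_iff_tendsto_slope' (notMem_Ioi.mpr le_rfl)]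
    exact htend
  have hd1 : d ≤ 1 := by
    have h := hd y ⟨hy0, hy⟩
    rwa [hder.derivWithin (uniqueDiffWithinAt_Ioi y)] at h
  have hslope : slope f y x ≤ d := by
    refine le_csInf (hne.image _) ?_
    rintro _ ⟨z, hz, rfl⟩
    refine (hcv.slope_mono hyI) ?_ ?_ (by linarith [hz.1])
    · exact ⟨hxI, by simp [hxy.ne]⟩
    · exact ⟨⟨by linarith [hz.1], hz.2.le⟩, by simp [hz.1.ne']⟩
  have hfinal : slope f x y ≤ 1 := by
    rw [slope_comm]
    exact hslope.trans hd1
  rw [slope_def_field] at hfinal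
  have hpos : (0:ℝ) < y - x := by linarith
  calc f y - f x = ((f y - f x) / (y - x)) * (y - x) := by field_simp
  _ ≤ 1 * (y - x) := by
      exact mul_le_mul_of_nonneg_right hfinal hpos.le
  _ = y - x := one_mul _

def ext1 (f : ℝ → ℝ) : ℝ → ℝ := fun x => if x < 1 then f x else sSup (f '' Ico 0 1)

lemma ext1_of_lt {f : ℝ → ℝ} {x : ℝ} (hx : x < 1) : ext1 f x = f x := if_pos hx

lemma ext1_of_one (f : ℝ → ℝ) : ext1 f 1 = sSup (f '' Ico 0 1) := if_neg (lt_irrefl 1)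

lemma image_Ico_nonempty (f : ℝ → ℝ) : (f '' Ico (0:ℝ) 1).Nonempty :=
  ⟨f 0, 0, ⟨le_rfl, zero_lt_one⟩, rfl⟩

section Master

variable {f : ℝ → ℝ} (hcv : ConvexOn ℝ (Icc 0 1) f) (hm : MonotoneOn f (Icc 0 1))
  (hd : ∀ t ∈ Ico (0:ℝ) 1, derivWithin f (Ioi t) t ≤ 1)

include hm in
lemma bddAbove_image_Ico : BddAbove (f '' Ico (0:ℝ) 1) := by
  refine ⟨f 1, ?_⟩
  rintro _ ⟨z, hz, rfl⟩
  exact hm ⟨hz.1, hz.2.le⟩ ⟨zero_le_one, le_rfl⟩ hz.2.le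

include hm in
lemma le_ext1_one {x : ℝ} (hx : x ∈ Ico (0:ℝ) 1) : f x ≤ ext1 f 1 := by
  rw [ext1_of_one]
  exact le_csSup (bddAbove_image_Ico hm) ⟨x, hx, rfl⟩

include hcv hm hd in
lemma ext1_one_le {x : ℝ} (hx : x ∈ Ico (0:ℝ) 1) : ext1 f 1 ≤ f x + (1 - x) := by
  rw [ext1_of_one]
  refine csSup_le (image_Ico_nonempty f) ?_
  rintro _ ⟨w, hw, rfl⟩
  rcases le_or_gt w x with hwx | hwx
  · have h1 : f w ≤ f x := hm ⟨hw.1, hw.2.le⟩ ⟨hx.1, hx.2.le⟩ hwx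
    have h2 : (0:ℝ) ≤ 1 - x := by linarith [hx.2]
    linarith
  · have := slope_le_one hcv hm hd hx.1 hwx hw.2
    linarith [hw.2]

include hcv hm hd in
lemma ext1_mono : MonotoneOn (ext1 f) (Icc 0 1) := by
  intro x hx y hy hxy
  rcases lt_or_ge y 1 with hy1 | hy1
  · rw [ext1_of_lt hy1, ext1_of_lt (lt_of_le_of_lt hxy hy1)]
    exact hm ⟨hx.1, hxy.trans hy1.le⟩ ⟨hx.1.trans hxy, hy1.le⟩ hxy
  · have hy1' : y = 1 := le_antisymm hy.2 hy1
    rcases lt_or_ge x 1 with hx1 | hx1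
    · rw [ext1_of_lt hx1, hy1']
      exact le_ext1_one hm ⟨hx.1, hx1⟩
    · have hx1' : x = 1 := le_antisymm hx.2 hx1
      rw [hx1', hy1']

include hcv hm hd in
lemma ext1_lip {x y : ℝ} (hx : x ∈ Icc (0:ℝ) 1) (hy : y ∈ Icc (0:ℝ) 1) (hxy : x ≤ y) :
    ext1 f y - ext1 f x ≤ y - x := by
  rcases lt_or_ge y 1 with hy1 | hy1
  · rcases eq_or_lt_of_le hxy with rfl | hxy'
    · simp
    · rw [ext1_of_lt hy1, ext1_of_lt (hxy'.trans hy1)]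
      exact slope_le_one hcv hm hd hx.1 hxy' hy1
  · have hy1' : y = 1 := le_antisymm hy.2 hy1
    rcases lt_or_ge x 1 with hx1 | hx1
    · rw [ext1_of_lt hx1, hy1']
      have := ext1_one_le hcv hm hd (⟨hx.1, hx1⟩ : x ∈ Ico (0:ℝ) 1)
      linarith
    · have hx1' : x = 1 := le_antisymm hx.2 hx1
      rw [hx1', hy1']
      simp

include hcv hm hd in
lemma ext1_lipOn : LipschitzOnWith 1 (ext1 f) (Icc 0 1) := by
  refine LipschitzOnWith.of_dist_le_mul fun x hx y hy => ?_
  rw [NNReal.coe_one, one_mul, Real.dist_eq, Real.dist_eq]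
  rcases le_total x y with h | h
  · have h1 := ext1_lip hcv hm hd hx hy h
    have h2 : 0 ≤ ext1 f y - ext1 f x :=
      sub_nonneg.2 (ext1_mono hcv hm hd hx hy h)
    rw [abs_sub_comm, abs_of_nonneg h2, abs_sub_comm, abs_of_nonneg (sub_nonneg.2 h)]
    exact h1
  · have h1 := ext1_lip hcv hm hd hy hx h
    have h2 : 0 ≤ ext1 f x - ext1 f y :=
      sub_nonneg.2 (ext1_mono hcv hm hd hy hx h)
    rw [abs_of_nonneg h2, abs_of_nonneg (sub_nonneg.2 h)]
    exact h1

include hcv hm hd in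
lemma ext1_convex : ConvexOn ℝ (Icc 0 1) (ext1 f) := by
  refine convexOn_of_slope_mono_adjacent (convex_Icc 0 1) ?_
  intro x y z hx hz hxy hyz
  have hx1 : x < 1 := hxy.trans (hyz.trans_le hz.2)
  have hy1 : y < 1 := hyz.trans_le hz.2
  have hyI : y ∈ Icc (0:ℝ) 1 := ⟨hx.1.trans hxy.le, hy1.le⟩
  rw [ext1_of_lt hx1, ext1_of_lt hy1]
  rcases lt_or_ge z 1 with hz1 | hz1
  · rw [ext1_of_lt hz1]
    exact hcv.slope_mono_adjacent hx hz hxy hyz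
  · have hz1' : z = 1 := le_antisymm hz.2 hz1
    subst hz1'
    set S := ext1 f 1 with hS
    set m := (f y - f x) / (y - x) with hmm
    by_contra hcon
    push_neg at hcon
    have h1y : (0:ℝ) < 1 - y := by linarith
    have hSfy : f y ≤ S := le_ext1_one hm ⟨hyI.1, hy1⟩
    have hlt : S - f y < m * (1 - y) := by
      have := (div_lt_iff₀ h1y).mp hcon
      linarith [this]
    have hmpos : 0 < m := by nlinarith
    set r := (S - f y) / m with hr
    have hr0 : 0 ≤ r := div_nonneg (by linarith) hmpos.le
    have hrlt : r < 1 - y := (div_lt_iff₀ hmpos).mpr (by nlinarith)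
    obtain ⟨w, hw1, hw2⟩ := exists_between (show y + r < 1 by linarith)
    have hwy : y < w := by linarith
    have hslope := hcv.slope_mono_adjacent hx
      (⟨by linarith [hyI.1], hw2.le⟩ : w ∈ Icc (0:ℝ) 1) hxy hwy
    have hfw_ge : m * (w - y) ≤ f w - f y := by
      have := (le_div_iff₀ (by linarith : (0:ℝ) < w - y)).mp hslope
      linarith [this]
    have hfw_le : f w ≤ S := le_ext1_one hm ⟨by linarith [hyI.1], hw2⟩
    have hmr : m * r = S - f y := by
      rw [hr, mul_div_cancel₀ (S - f y) hmpos.ne']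
    nlinarith [mul_lt_mul_of_pos_left (show r < w - y by linarith) hmpos]

end Master

lemma gF_lipOn {f : ℝ → ℝ} (h : LipschitzOnWith 1 f (Icc 0 1)) :
    LipschitzOnWith 2 (fun t => mkp t (f t)) (Icc (0:ℝ) 1) := by
  refine LipschitzOnWith.of_dist_le_mul fun x hx y hy => ?_
  rw [pt2_dist, Real.dist_eq]
  have h1 : |f x - f y| ≤ |x - y| := by
    have := h.dist_le_mul x hx y hy
    simpa [Real.dist_eq] using this
  have h2 : Real.sqrt ((x - y)^2 + (f x - f y)^2) ≤ Real.sqrt ((2 * |x - y|)^2) := by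
    refine Real.sqrt_le_sqrt ?_
    have e1 : (f x - f y)^2 ≤ (x - y)^2 := by
      rw [← sq_abs (f x - f y), ← sq_abs (x - y)]
      exact pow_le_pow_left₀ (abs_nonneg _) h1 2
    have e2 : (x - y)^2 = |x - y|^2 := (sq_abs _).symm
    nlinarith [abs_nonneg (x - y)]
  refine h2.trans (le_of_eq ?_)
  rw [Real.sqrt_sq (by positivity)]
  push_cast
  ring

lemma measure_graph_eq {f : ℝ → ℝ} (hcv : ConvexOn ℝ (Icc 0 1) f)
    (hm : MonotoneOn f (Icc 0 1))
    (hd : ∀ t ∈ Ico (0:ℝ) 1, derivWithin f (Ioi t) t ≤ 1) :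
    μH[1] (curveGraph f (Icc 0 1)) = eVariationOn (fun t => mkp t (ext1 f t)) (Icc 0 1) ∧
      eVariationOn (fun t => mkp t (ext1 f t)) (Icc 0 1) ≠ ⊤ := by
  set F := ext1 f with hF
  have hlipF : LipschitzOnWith 1 F (Icc 0 1) := ext1_lipOn hcv hm hd
  have hglip : LipschitzOnWith 2 (fun t => mkp t (F t)) (Icc 0 1) := gF_lipOn hlipF
  have hfin : eVariationOn (fun t => mkp t (F t)) (Icc 0 1) ≠ ⊤ := by
    have hcomp := hglip.comp_eVariationOn_le (mapsTo_id (Icc (0:ℝ) 1))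
    have hid : eVariationOn (id : ℝ → ℝ) (Icc 0 1) ≤ ENNReal.ofReal (1 - 0) := by
      have hmono : MonotoneOn (id : ℝ → ℝ) (Icc (0:ℝ) 1) := fun a _ b _ h => h
      have := hmono.eVariationOn_le (⟨le_rfl, zero_le_one⟩ : (0:ℝ) ∈ Icc (0:ℝ) 1)
        ⟨zero_le_one, le_rfl⟩
      rwa [inter_self] at this
    have : eVariationOn (fun t => mkp t (F t)) (Icc 0 1) ≤ 2 * ENNReal.ofReal (1 - 0) := by
      refine le_trans (le_of_eq ?_) (hcomp.trans (mul_le_mul_right hid 2))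
      rfl
    refine ne_top_of_le_ne_top ?_ this
    simp
  refine ⟨?_, hfin⟩
  have hset : curveGraph f (Icc 0 1) = (fun t => mkp t (f t)) '' Icc 0 1 := rfl
  have hIco : Ico (0:ℝ) 1 ∪ {1} = Icc 0 1 := Ico_union_right zero_le_one
  have h1 : (fun t => mkp t (f t)) '' Icc (0:ℝ) 1
      = ((fun t => mkp t (f t)) '' Ico 0 1) ∪ {mkp 1 (f 1)} := by
    rw [← hIco, image_union, image_singleton]
  have h2 : (fun t => mkp t (F t)) '' Icc (0:ℝ) 1
      = ((fun t => mkp t (F t)) '' Ico 0 1) ∪ {mkp 1 (F 1)} := by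
    rw [← hIco, image_union, image_singleton]
  have h3 : (fun t => mkp t (f t)) '' Ico (0:ℝ) 1 = (fun t => mkp t (F t)) '' Ico 0 1 :=
    image_congr fun x hx => by rw [hF, ext1_of_lt hx.2]
  have hmeas : μH[1] (curveGraph f (Icc 0 1)) = μH[1] ((fun t => mkp t (F t)) '' Icc (0:ℝ) 1) := by
    rw [hset, h1, h2, h3, measure_union_singleton_eq, measure_union_singleton_eq]
  rw [hmeas]
  refine le_antisymm (hausdorff_le_eVariationOn hfin) ?_
  refine eVariationOn_le_hausdorff hglip.continuousOn ?_
  intro a _ b _ hab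
  have := congrArg (fun p : Pt 2 => p 0) hab
  simpa using this

lemma ext1_le_add {f₁ f₂ : ℝ → ℝ} (hm₂ : MonotoneOn f₂ (Icc 0 1)) {ε : ℝ}
    (hε : ∀ x ∈ Icc (0:ℝ) 1, f₁ x - f₂ x ≤ ε) :
    ∀ x ∈ Icc (0:ℝ) 1, ext1 f₁ x ≤ ext1 f₂ x + ε := by
  intro x hx
  rcases lt_or_ge x 1 with hx1 | hx1
  · rw [ext1_of_lt hx1, ext1_of_lt hx1]
    linarith [hε x hx]
  · have hx1' : x = 1 := le_antisymm hx.2 hx1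
    subst hx1'
    rw [ext1_of_one f₁]
    refine csSup_le (image_Ico_nonempty f₁) ?_
    rintro _ ⟨w, hw, rfl⟩
    have h1 : f₂ w ≤ ext1 f₂ 1 := le_ext1_one hm₂ hw
    have h2 := hε w ⟨hw.1, hw.2.le⟩
    linarith

/-- Lemma 5.1 of the paper. -/
theorem statement9 :
    ∃ C : ℝ, 0 < C ∧ ∀ f₁ f₂ : ℝ → ℝ,
      ConvexOn ℝ (Set.Icc 0 1) f₁ → MonotoneOn f₁ (Set.Icc 0 1) →
      (∀ t ∈ Set.Ico (0:ℝ) 1, derivWithin f₁ (Set.Ioi t) t ≤ 1) →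
      ConvexOn ℝ (Set.Icc 0 1) f₂ → MonotoneOn f₂ (Set.Icc 0 1) →
      (∀ t ∈ Set.Ico (0:ℝ) 1, derivWithin f₂ (Set.Ioi t) t ≤ 1) →
      |(μH[1] (curveGraph f₁ (Set.Icc 0 1))).toReal -
        (μH[1] (curveGraph f₂ (Set.Icc 0 1))).toReal| ≤
        C * ⨆ x : Set.Icc (0:ℝ) 1, |f₁ x - f₂ x| := by
  refine ⟨4, by norm_num, ?_⟩
  intro f₁ f₂ hcv₁ hm₁ hd₁ hcv₂ hm₂ hd₂
  set ε : ℝ := ⨆ x : Set.Icc (0:ℝ) 1, |f₁ x - f₂ x| with hεdef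
  have hBdd : BddAbove (Set.range fun x : Set.Icc (0:ℝ) 1 => |f₁ x - f₂ x|) := by
    refine ⟨(f₁ 1 - f₁ 0) + (f₂ 1 - f₂ 0) + |f₁ 0 - f₂ 0|, ?_⟩
    rintro _ ⟨⟨x, hx⟩, rfl⟩
    dsimp only
    have h10 : f₁ 0 ≤ f₁ x := hm₁ ⟨le_rfl, zero_le_one⟩ hx hx.1
    have h11 : f₁ x ≤ f₁ 1 := hm₁ hx ⟨zero_le_one, le_rfl⟩ hx.2
    have h20 : f₂ 0 ≤ f₂ x := hm₂ ⟨le_rfl, zero_le_one⟩ hx hx.1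
    have h21 : f₂ x ≤ f₂ 1 := hm₂ hx ⟨zero_le_one, le_rfl⟩ hx.2
    have t1 : |f₁ x - f₂ x| ≤ |f₁ x - f₁ 0| + |f₁ 0 - f₂ x| := abs_sub_le _ _ _
    have t2 : |f₁ 0 - f₂ x| ≤ |f₁ 0 - f₂ 0| + |f₂ 0 - f₂ x| := abs_sub_le _ _ _
    have e1 : |f₁ x - f₁ 0| = f₁ x - f₁ 0 := abs_of_nonneg (by linarith)
    have e2 : |f₂ 0 - f₂ x| = f₂ x - f₂ 0 := by
      rw [abs_sub_comm]; exact abs_of_nonneg (by linarith)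
    linarith
  have hεx : ∀ x ∈ Icc (0:ℝ) 1, |f₁ x - f₂ x| ≤ ε := fun x hx =>
    le_ciSup hBdd (⟨x, hx⟩ : Set.Icc (0:ℝ) 1)
  have hε0 : 0 ≤ ε :=
    le_trans (abs_nonneg _) (hεx 0 ⟨le_rfl, zero_le_one⟩)
  obtain ⟨hmeas₁, hfin₁⟩ := measure_graph_eq hcv₁ hm₁ hd₁
  obtain ⟨hmeas₂, hfin₂⟩ := measure_graph_eq hcv₂ hm₂ hd₂
  set F₁ := ext1 f₁ with hF₁
  set F₂ := ext1 f₂ with hF₂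
  set V₁ := eVariationOn (fun t => mkp t (F₁ t)) (Icc 0 1) with hV₁
  set V₂ := eVariationOn (fun t => mkp t (F₂ t)) (Icc 0 1) with hV₂
  have hcomp12 : ∀ x ∈ Icc (0:ℝ) 1, F₁ x ≤ F₂ x + ε :=
    ext1_le_add hm₂ fun x hx => by
      have := hεx x hx
      have := le_of_abs_le this
      linarith
  have hcomp21 : ∀ x ∈ Icc (0:ℝ) 1, F₂ x ≤ F₁ x + ε :=
    ext1_le_add hm₁ fun x hx => by
      have h := hεx x hx
      rw [abs_sub_comm] at h
      have := le_of_abs_le h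
      linarith
  -- generic one-sided bound
  have main : ∀ (g₁ g₂ : ℝ → ℝ), ConvexOn ℝ (Icc 0 1) g₁ → MonotoneOn g₁ (Icc 0 1) →
      (∀ t ∈ Ico (0:ℝ) 1, derivWithin g₁ (Ioi t) t ≤ 1) →
      ConvexOn ℝ (Icc 0 1) g₂ → MonotoneOn g₂ (Icc 0 1) →
      (∀ t ∈ Ico (0:ℝ) 1, derivWithin g₂ (Ioi t) t ≤ 1) →
      (∀ x ∈ Icc (0:ℝ) 1, ext1 g₁ x ≤ ext1 g₂ x + ε) →
      (∀ x ∈ Icc (0:ℝ) 1, ext1 g₂ x ≤ ext1 g₁ x + ε) →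
      eVariationOn (fun t => mkp t (ext1 g₂ t)) (Icc 0 1) ≤
        eVariationOn (fun t => mkp t (ext1 g₁ t)) (Icc 0 1)
          + ENNReal.ofReal (2*ε) + ENNReal.ofReal (2*ε) := by
    intro g₁ g₂ hcv₁' hm₁' hd₁' hcv₂' hm₂' hd₂' h12 h21
    set G₁ := ext1 g₁ with hG₁
    set G₂ := ext1 g₂ with hG₂
    have happ := key_ineq (φ := G₁) (ψ := fun t => G₂ t + ε)
      (ext1_lipOn hcv₁' hm₁' hd₁').continuousOn
      (fun x hx => by show G₁ x ≤ G₂ x + ε; linarith [h12 x hx])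
      (fun a ha b hb hab => by
        have := ext1_mono hcv₂' hm₂' hd₂' ha hb hab
        dsimp only
        linarith)
      (((ext1_lipOn hcv₂' hm₂' hd₂').continuousOn).add continuousOn_const)
      (by
        have := (ext1_convex hcv₂' hm₂' hd₂').add_const ε
        convert this using 1
        all_goals rfl)
    have hVψ : eVariationOn (fun t => mkp t (G₂ t + ε)) (Icc (0:ℝ) 1)
        = eVariationOn (fun t => mkp t (G₂ t)) (Icc 0 1) := by
      refine eVariationOn_congr_edist fun x _ y _ => ?_
      rw [edist_dist, edist_dist, pt2_dist, pt2_dist]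
      ring_nf
    rw [hVψ] at happ
    have hg0 : G₂ 0 + ε - G₁ 0 ≤ 2*ε := by
      have := h21 0 ⟨le_rfl, zero_le_one⟩
      linarith
    have hg1 : G₂ 1 + ε - G₁ 1 ≤ 2*ε := by
      have := h21 1 ⟨zero_le_one, le_rfl⟩
      linarith
    calc eVariationOn (fun t => mkp t (G₂ t)) (Icc 0 1)
        ≤ eVariationOn (fun t => mkp t (G₁ t)) (Icc 0 1)
          + ENNReal.ofReal (G₂ 0 + ε - G₁ 0) + ENNReal.ofReal (G₂ 1 + ε - G₁ 1) := happ
    _ ≤ eVariationOn (fun t => mkp t (G₁ t)) (Icc 0 1)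
          + ENNReal.ofReal (2*ε) + ENNReal.ofReal (2*ε) := by
        exact add_le_add (add_le_add le_rfl (ENNReal.ofReal_le_ofReal hg0))
          (ENNReal.ofReal_le_ofReal hg1)
  have key12 : V₂ ≤ V₁ + ENNReal.ofReal (2*ε) + ENNReal.ofReal (2*ε) :=
    main f₁ f₂ hcv₁ hm₁ hd₁ hcv₂ hm₂ hd₂ hcomp12 hcomp21
  have key21 : V₁ ≤ V₂ + ENNReal.ofReal (2*ε) + ENNReal.ofReal (2*ε) :=
    main f₂ f₁ hcv₂ hm₂ hd₂ hcv₁ hm₁ hd₁ hcomp21 hcomp12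
  rw [hmeas₁, hmeas₂]
  have htoReal : ∀ (A B : ℝ≥0∞), B ≠ ⊤ →
      A ≤ B + ENNReal.ofReal (2*ε) + ENNReal.ofReal (2*ε) →
      A.toReal ≤ B.toReal + 2*ε + 2*ε := by
    intro A B hB h
    have hRfin : B + ENNReal.ofReal (2*ε) + ENNReal.ofReal (2*ε) ≠ ⊤ := by
      simp [hB, ENNReal.mul_eq_top]
    have h2 := ENNReal.toReal_mono hRfin h
    rw [ENNReal.toReal_add (by simp [hB, ENNReal.mul_eq_top]) ENNReal.ofReal_ne_top,
      ENNReal.toReal_add hB ENNReal.ofReal_ne_top,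
      ENNReal.toReal_ofReal (by positivity)] at h2
    exact h2
  have hle1 := htoReal V₁ V₂ hfin₂ key21
  have hle2 := htoReal V₂ V₁ hfin₁ key12
  rw [abs_sub_le_iff]
  constructor <;> [skip; skip] <;> linarith
end
end

section
/- There exists a constant C > 0 such that for every integer N ≥ 2 there exist a finite set Λ with #Λ ≤ N^{C·N} and a map P : 𝒞⁺ → Λ with the property that whenever f, g ∈ 𝒞⁺ satisfy P(f) = P(g), then D(f, g) ≤ C N^{-2}. -/
open MeasureTheory Metric Set
open scoped ENNReal NNReal

noncomputable section

/-- The family `𝒞⁺` of graphs of convex non-decreasing functions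
`f : [0,1] → [0,1]` whose right derivative is bounded above by `1`. -/
def CPlus : Set (Set (Pt 2)) :=
  {γ | ∃ f : ℝ → ℝ, ConvexOn ℝ (Set.Icc 0 1) f ∧ MonotoneOn f (Set.Icc 0 1) ∧
    (∀ x ∈ Set.Icc (0:ℝ) 1, f x ∈ Set.Icc (0:ℝ) 1) ∧
    (∀ t ∈ Set.Ico (0:ℝ) 1, derivWithin f (Set.Ioi t) t ≤ 1) ∧
    γ = curveGraph f (Set.Icc 0 1)}

namespace St12
open Filter Topology


/-- Set of points where all forward slopes (staying below 1) exceed `r`. -/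
def Sset (f : ℝ → ℝ) (r : ℝ) : Set ℝ :=
  {p : ℝ | 0 ≤ p ∧ p < 1 ∧ ∀ y, p < y → y < 1 → r * (y - p) < f y - f p}

/-- Crossing point of the right derivative over level `r`. -/
def tb (f : ℝ → ℝ) (r : ℝ) : ℝ := sInf (Sset f r ∪ {1})

lemma one_mem (f : ℝ → ℝ) (r : ℝ) : (1:ℝ) ∈ Sset f r ∪ {1} := Or.inr rfl

lemma bddBelow_S (f : ℝ → ℝ) (r : ℝ) : BddBelow (Sset f r ∪ {1}) := by
  refine ⟨0, fun z hz => ?_⟩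
  rcases hz with h | h
  · exact h.1
  · simp only [mem_singleton_iff] at h; linarith [h.le]

lemma tb_nonneg (f : ℝ → ℝ) (r : ℝ) : 0 ≤ tb f r := by
  apply le_csInf ⟨1, one_mem f r⟩
  intro z hz
  rcases hz with h | h
  · exact h.1
  · simp only [mem_singleton_iff] at h; linarith [h.le]

lemma tb_le_one (f : ℝ → ℝ) (r : ℝ) : tb f r ≤ 1 :=
  csInf_le (bddBelow_S f r) (one_mem f r)

lemma tb_mono (f : ℝ → ℝ) {r r' : ℝ} (h : r ≤ r') : tb f r ≤ tb f r' := by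
  apply csInf_le_csInf (bddBelow_S f r) ⟨1, one_mem f r'⟩
  intro z hz
  rcases hz with hz | hz
  · left
    exact ⟨hz.1, hz.2.1, fun y hy hy1 => lt_of_le_of_lt
      (by nlinarith [hz.1, hy]) (hz.2.2 y hy hy1)⟩
  · exact Or.inr hz

lemma mem_Sset_of_le {f : ℝ → ℝ} (hc : ConvexOn ℝ (Icc 0 1) f) {r e p : ℝ}
    (he : e ∈ Sset f r) (hep : e ≤ p) (hp1 : p < 1) : p ∈ Sset f r := by
  obtain ⟨he0, he1, hs⟩ := he
  refine ⟨he0.trans hep, hp1, ?_⟩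
  intro y hy hy1
  rcases eq_or_lt_of_le hep with rfl | hep'
  · exact hs y hy hy1
  · have h1 := hs y (hep'.trans hy) hy1
    have h2 := hc.slope_mono_adjacent (x := e) (y := p) (z := y)
      ⟨he0, by linarith⟩ ⟨by linarith, hy1.le⟩ hep' hy
    rw [div_le_div_iff₀ (by linarith) (by linarith)] at h2
    nlinarith [sub_pos.2 hep', sub_pos.2 hy]

/-- lower band bound -/
lemma band_low {f : ℝ → ℝ} (hc : ConvexOn ℝ (Icc 0 1) f)
    (hm : MonotoneOn f (Icc 0 1)) {r a b : ℝ} (hr0 : 0 ≤ r) (hr1 : r ≤ 1)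
    (hta : tb f r ≤ a) (ha : 0 ≤ a) (hab : a < b) (hb : b < 1) :
    r * (b - a) ≤ f b - f a := by
  have h := le_of_forall_pos_le_add (a := r * (b - a)) (b := f b - f a)
  apply h
  intro ε hε
  set δ := min ε ((b - a) / 2) with hδdef
  have hδ : 0 < δ := lt_min hε (by linarith)
  have hδε : δ ≤ ε := min_le_left _ _
  have hδb : a + δ < b := by
    have : δ ≤ (b - a) / 2 := min_le_right _ _
    linarith
  have hxS : a + δ ∈ Sset f r := by
    have hlt : tb f r < a + δ := by linarith
    obtain ⟨e, heS, hel⟩ := exists_lt_of_csInf_lt ⟨1, one_mem f r⟩ hlt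
    rcases heS with heS | he1
    · exact mem_Sset_of_le hc heS hel.le (by linarith)
    · simp only [mem_singleton_iff] at he1; subst he1; linarith
  have hkey := hxS.2.2 b hδb hb
  have hmono : f a ≤ f (a + δ) := hm ⟨ha, by linarith⟩ ⟨by linarith, by linarith⟩ (by linarith)
  nlinarith

/-- upper band bound -/
lemma band_up {f : ℝ → ℝ} (hc : ConvexOn ℝ (Icc 0 1) f)
    (hlip : ∀ a b : ℝ, 0 ≤ a → a < b → b < 1 → f b - f a ≤ b - a)
    {r a b : ℝ} (hr0 : 0 ≤ r)
    (hbt : b ≤ tb f r) (ha : 0 ≤ a) (hab : a < b) (hb : b < 1) :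
    f b - f a ≤ r * (b - a) := by
  apply le_of_forall_pos_le_add
  intro ε hε
  set δ := min ε ((b - a) / 2) with hδdef
  have hδ : 0 < δ := lt_min hε (by linarith)
  have hδε : δ ≤ ε := min_le_left _ _
  have hay : a < b - δ := by
    have : δ ≤ (b - a) / 2 := min_le_right _ _
    linarith
  set y := b - δ with hydef
  have hyS : y ∉ Sset f r := by
    intro hyS
    have : tb f r ≤ y := csInf_le (bddBelow_S f r) (Or.inl hyS)
    linarith
  have hy0 : 0 ≤ y := by linarith
  have hy1 : y < 1 := by linarith
  have hz : ∃ z, y < z ∧ z < 1 ∧ f z - f y ≤ r * (z - y) := by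
    by_contra hcon
    push_neg at hcon
    exact hyS ⟨hy0, hy1, fun z h1 h2 => hcon z h1 h2⟩
  obtain ⟨z, hyz, hz1, hzs⟩ := hz
  have h2 := hc.slope_mono_adjacent (x := a) (y := y) (z := z)
    ⟨ha, by linarith⟩ ⟨by linarith, hz1.le⟩ hay hyz
  have h3 : (f z - f y) / (z - y) ≤ r := by
    rw [div_le_iff₀ (by linarith)]; linarith
  have h4 : (f y - f a) / (y - a) ≤ r := le_trans h2 h3
  rw [div_le_iff₀ (by linarith)] at h4
  have h5 : f b - f y ≤ b - y := hlip y b hy0 (by linarith) hb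
  nlinarith

lemma lip_of_deriv {f : ℝ → ℝ} (hc : ConvexOn ℝ (Icc 0 1) f)
    (hd : ∀ t ∈ Ico (0:ℝ) 1, derivWithin f (Ioi t) t ≤ 1) :
    ∀ a b : ℝ, 0 ≤ a → a < b → b < 1 → f b - f a ≤ b - a := by
  intro a b ha hab hb
  -- slopes from b are bounded below by slope(a,b)
  have hmono : MonotoneOn (slope f b) (Ioo b 1) := by
    intro y₁ h₁ y₂ h₂ h12
    rcases eq_or_lt_of_le h12 with rfl | h12'
    · exact le_rfl
    · have hadj := hc.slope_mono_adjacent (x := b) (y := y₁) (z := y₂)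
        ⟨by linarith [h₁.1], by linarith [h₁.2]⟩ ⟨by linarith [h₂.1], h₂.2.le⟩ h₁.1 h12'
      -- slope f b y₁ = (f y₁ - f b)/(y₁ - b)
      rw [slope_def_field, slope_def_field]
      have e1 : (f y₁ - f b) / (y₁ - b) ≤ (f y₂ - f y₁) / (y₂ - y₁) := hadj
      rw [div_le_div_iff₀ (by linarith [h₁.1]) (by linarith [h₁.1, h12'])] at e1 ⊢
      nlinarith [sub_pos.2 h₁.1, sub_pos.2 h12']
  have hblow : ∀ y ∈ Ioo b 1, (f b - f a) / (b - a) ≤ slope f b y := by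
    intro y hy
    have hadj := hc.slope_mono_adjacent (x := a) (y := b) (z := y)
      ⟨ha, by linarith [hy.2]⟩ ⟨by linarith [hy.1], hy.2.le⟩ hab hy.1
    rw [slope_def_field]
    exact hadj
  have hbdd : BddBelow (slope f b '' Ioo b 1) := by
    refine ⟨(f b - f a) / (b - a), ?_⟩
    rintro z ⟨y, hy, rfl⟩
    exact hblow y hy
  have hne : (Ioo b 1).Nonempty := ⟨(b+1)/2, by constructor <;> [linarith; linarith]⟩
  set L := sInf (slope f b '' Ioo b 1) with hL
  have htend : Tendsto (slope f b) (𝓝[>] b) (𝓝 L) :=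
    MonotoneOn.tendsto_nhdsWithin_Ioo_right hne hmono hbdd
  have hder : HasDerivWithinAt f L (Ioi b) b := by
    rw [hasDerivWithinAt_iff_tendsto_slope' (notMem_Ioi.2 le_rfl)]
    exact htend
  have hval : derivWithin f (Ioi b) b = L := hder.derivWithin (uniqueDiffWithinAt_Ioi b)
  have hL1 : L ≤ 1 := by
    rw [← hval]; exact hd b ⟨by linarith, hb⟩
  have hsL : (f b - f a) / (b - a) ≤ L := le_csInf (hne.image _) (by rintro z ⟨y, hy, rfl⟩; exact hblow y hy)
  have := hsL.trans hL1
  rw [div_le_one (by linarith)] at this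
  linarith


lemma star {f : ℝ → ℝ} (hc : ConvexOn ℝ (Icc 0 1) f)
    (hm : MonotoneOn f (Icc 0 1))
    (hlip : ∀ a b : ℝ, 0 ≤ a → a < b → b < 1 → f b - f a ≤ b - a)
    (N : ℕ) (hN : 1 ≤ N) {u x : ℝ} (hu : 0 ≤ u) (hux : u ≤ x) (hx : x < 1) :
    0 ≤ (f x - f u) - (1/(N:ℝ)) * ∑ j ∈ Finset.range N, (x - max u (min (tb f (((j:ℕ)+1:ℝ)/N)) x)) ∧
    (f x - f u) - (1/(N:ℝ)) * ∑ j ∈ Finset.range N, (x - max u (min (tb f (((j:ℕ)+1:ℝ)/N)) x)) ≤ (x - u)/N := by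
  have hNR : (0:ℝ) < N := by exact_mod_cast hN
  set Q : ℕ → ℝ := fun i => if i = 0 then u else if i ≤ N then max u (min (tb f ((i:ℝ)/N)) x) else x with hQdef
  have hQ0 : Q 0 = u := by simp [hQdef]
  have hQtop : Q (N+1) = x := by
    simp only [hQdef]
    rw [if_neg (by omega), if_neg (by omega)]
  have hQu : ∀ i, u ≤ Q i := by
    intro i; simp only [hQdef]
    split_ifs with h1 h2
    · exact le_rfl
    · exact le_max_left _ _
    · exact hux
  have hQx : ∀ i, Q i ≤ x := by
    intro i; simp only [hQdef]
    split_ifs with h1 h2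
    · exact hux
    · exact max_le hux (min_le_right _ _)
    · exact le_rfl
  have hQmono : ∀ i, i ≤ N → Q i ≤ Q (i+1) := by
    intro i hi
    rcases Nat.eq_or_lt_of_le hi with rfl | hi'
    · rw [hQtop]; exact hQx _
    · have hi1 : i + 1 ≤ N := hi'
      by_cases h0 : i = 0
      · subst h0; rw [hQ0]; exact hQu 1
      · simp only [hQdef]
        rw [if_neg h0, if_pos hi, if_neg (by omega), if_pos hi1]
        have ht : tb f ((i:ℝ)/N) ≤ tb f (((i+1:ℕ):ℝ)/N) := by
          apply tb_mono
          gcongr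
          · push_cast; linarith
        exact max_le_max le_rfl (min_le_min ht le_rfl)
  -- the per-interval bounds
  have keyLow : ∀ i, i ≤ N → ((i:ℝ)/N) * (Q (i+1) - Q i) ≤ f (Q (i+1)) - f (Q i) := by
    intro i hi
    rcases eq_or_lt_of_le (hQmono i hi) with heq | hlt
    · rw [← heq]; simp
    · by_cases h0 : i = 0
      · subst h0
        simp only [Nat.cast_zero, zero_div, zero_mul]
        have := hm ⟨le_trans hu (hQu 0), le_trans (hQx 0) hx.le⟩
          ⟨le_trans hu (hQu 1), le_trans (hQx 1) hx.le⟩ hlt.le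
        linarith
      · -- tb f (i/N) ≤ Q i
        have hQi : Q i = max u (min (tb f ((i:ℝ)/N)) x) := by
          simp only [hQdef]; rw [if_neg h0, if_pos hi]
        have htbx : tb f ((i:ℝ)/N) < x := by
          by_contra hcon
          push_neg at hcon
          have : Q i = x := by
            rw [hQi, min_eq_right hcon, max_eq_right hux]
          have := hQx (i+1); linarith [hlt, this]
        have hta : tb f ((i:ℝ)/N) ≤ Q i := by
          rw [hQi, min_eq_left htbx.le]; exact le_max_right _ _
        exact band_low hc hm
          (by positivity)
          (by rw [div_le_one hNR]; exact_mod_cast hi)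
          hta (le_trans hu (hQu i)) hlt (lt_of_le_of_lt (hQx _) hx)
  have keyUp : ∀ i, i ≤ N → f (Q (i+1)) - f (Q i) ≤ ((i:ℝ)/N) * (Q (i+1) - Q i) + (1/N) * (Q (i+1) - Q i) := by
    intro i hi
    rcases eq_or_lt_of_le (hQmono i hi) with heq | hlt
    · rw [← heq]; simp
    · rcases Nat.eq_or_lt_of_le hi with rfl | hi'
      · -- top interval: use Lipschitz
        have h1 := hlip (Q i) (Q (i+1)) (le_trans hu (hQu i)) hlt (lt_of_le_of_lt (hQx _) hx)
        have h2 : ((i:ℝ))/(i:ℝ) = 1 := div_self (ne_of_gt hNR)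
        rw [h2]
        have h3 : 0 ≤ 1/((i:ℕ):ℝ) * (Q (i+1) - Q i) :=
          mul_nonneg (by positivity) (by linarith)
        linarith
      · have hi1 : i + 1 ≤ N := hi'
        have hQi1 : Q (i+1) = max u (min (tb f (((i+1:ℕ):ℝ)/N)) x) := by
          simp only [hQdef]; rw [if_neg (by omega), if_pos hi1]
        have hble : Q (i+1) ≤ tb f (((i+1:ℕ):ℝ)/N) := by
          rcases le_total (min (tb f (((i+1:ℕ):ℝ)/N)) x) u with hcase | hcase
          · exfalso
            have : Q (i+1) = u := by rw [hQi1, max_eq_left hcase]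
            have := hQu i; linarith
          · rw [hQi1, max_eq_right hcase]; exact min_le_left _ _
        have hb := band_up hc hlip (r := ((i+1:ℕ):ℝ)/N) (by positivity)
          hble (le_trans hu (hQu i)) hlt (lt_of_le_of_lt (hQx _) hx)
        have hcast : ((i+1:ℕ):ℝ)/N = (i:ℝ)/N + 1/N := by push_cast; ring
        rw [hcast] at hb
        nlinarith [sub_pos.2 hlt]
  -- telescoping identities
  have tele1 : ∑ i ∈ Finset.range (N+1), (f (Q (i+1)) - f (Q i)) = f x - f u := by
    rw [Finset.sum_range_sub (fun i => f (Q i))]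
    rw [hQtop, hQ0]
  have tele2 : ∑ i ∈ Finset.range (N+1), (Q (i+1) - Q i) = x - u := by
    rw [Finset.sum_range_sub Q, hQtop, hQ0]
  have tele3 : ∑ i ∈ Finset.range (N+1), ((i:ℝ)) * (Q (i+1) - Q i)
      = ∑ j ∈ Finset.range N, (x - Q (j+1)) := by
    have t1 : ∑ i ∈ Finset.range (N+1), (((i+1:ℕ):ℝ) * Q (i+1) - (i:ℝ) * Q i)
        = ((N+1:ℕ):ℝ) * Q (N+1) - ((0:ℕ):ℝ) * Q 0 :=
      Finset.sum_range_sub (fun i => ((i:ℕ):ℝ) * Q i) (N+1)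
    have t2 : ∀ i ∈ Finset.range (N+1), ((i:ℝ)) * (Q (i+1) - Q i)
        = (((i+1:ℕ):ℝ) * Q (i+1) - (i:ℝ) * Q i) - Q (i+1) := by
      intro i _; push_cast; ring
    rw [Finset.sum_congr rfl t2, Finset.sum_sub_distrib, t1]
    rw [Finset.sum_range_succ (fun i => Q (i+1)) N]
    have t3 : ∑ j ∈ Finset.range N, (x - Q (j+1))
        = (N:ℝ) * x - ∑ j ∈ Finset.range N, Q (j+1) := by
      rw [Finset.sum_sub_distrib, Finset.sum_const, Finset.card_range, nsmul_eq_mul]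
    rw [t3, hQtop]
    push_cast
    ring
  -- rewrite the target sum
  have hsum_eq : ∑ j ∈ Finset.range N, (x - max u (min (tb f (((j:ℕ)+1:ℝ)/N)) x))
      = ∑ j ∈ Finset.range N, (x - Q (j+1)) := by
    apply Finset.sum_congr rfl
    intro j hj
    have hj' : j + 1 ≤ N := Nat.succ_le_of_lt (Finset.mem_range.mp hj)
    have : Q (j+1) = max u (min (tb f (((j+1:ℕ):ℝ)/N)) x) := by
      simp only [hQdef]; rw [if_neg (by omega), if_pos hj']
    rw [this]
    norm_num
  rw [hsum_eq, ← tele3]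
  rw [← tele1]
  rw [Finset.mul_sum]
  rw [← Finset.sum_sub_distrib]
  constructor
  · apply Finset.sum_nonneg
    intro i hi
    have hi' : i ≤ N := Nat.lt_succ_iff.mp (Finset.mem_range.mp hi)
    have := keyLow i hi'
    have hrw : (1/(N:ℝ)) * ((i:ℝ) * (Q (i+1) - Q i)) = ((i:ℝ)/N) * (Q (i+1) - Q i) := by ring
    rw [hrw]
    linarith
  · have hub : ∀ i ∈ Finset.range (N+1),
        f (Q (i+1)) - f (Q i) - (1/(N:ℝ)) * ((i:ℝ) * (Q (i+1) - Q i))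
        ≤ (1/(N:ℝ)) * (Q (i+1) - Q i) := by
      intro i hi
      have hi' : i ≤ N := Nat.lt_succ_iff.mp (Finset.mem_range.mp hi)
      have := keyUp i hi'
      have hrw : (1/(N:ℝ)) * ((i:ℝ) * (Q (i+1) - Q i)) = ((i:ℝ)/N) * (Q (i+1) - Q i) := by ring
      rw [hrw]
      linarith
    calc ∑ i ∈ Finset.range (N+1), (f (Q (i+1)) - f (Q i) - (1/(N:ℝ)) * ((i:ℝ) * (Q (i+1) - Q i)))
        ≤ ∑ i ∈ Finset.range (N+1), (1/(N:ℝ)) * (Q (i+1) - Q i) := Finset.sum_le_sum hub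
      _ = (1/(N:ℝ)) * ∑ i ∈ Finset.range (N+1), (Q (i+1) - Q i) := by rw [Finset.mul_sum]
      _ = (x - u)/N := by rw [tele2]; ring

lemma floor_close {M : ℕ} (hM : 0 < M) {a b : ℝ} (ha0 : 0 ≤ a) (ha1 : a ≤ 1)
    (hb0 : 0 ≤ b) (hb1 : b ≤ 1)
    (h : min ⌊(M:ℝ)*a⌋₊ M = min ⌊(M:ℝ)*b⌋₊ M) : |a - b| ≤ 1/(M:ℝ) := by
  have hMR : (0:ℝ) < M := by exact_mod_cast hM
  have hfa : ⌊(M:ℝ)*a⌋₊ ≤ M := by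
    calc ⌊(M:ℝ)*a⌋₊ ≤ ⌊(M:ℝ)⌋₊ := Nat.floor_mono (by nlinarith)
    _ = M := Nat.floor_natCast M
  have hfb : ⌊(M:ℝ)*b⌋₊ ≤ M := by
    calc ⌊(M:ℝ)*b⌋₊ ≤ ⌊(M:ℝ)⌋₊ := Nat.floor_mono (by nlinarith)
    _ = M := Nat.floor_natCast M
  rw [min_eq_left hfa, min_eq_left hfb] at h
  have k1 : (M:ℝ)*a < ⌊(M:ℝ)*a⌋₊ + 1 := Nat.lt_floor_add_one _
  have k2 : (M:ℝ)*b < ⌊(M:ℝ)*b⌋₊ + 1 := Nat.lt_floor_add_one _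
  have k3 : (⌊(M:ℝ)*a⌋₊ : ℝ) ≤ (M:ℝ)*a := Nat.floor_le (by positivity)
  have k4 : (⌊(M:ℝ)*b⌋₊ : ℝ) ≤ (M:ℝ)*b := Nat.floor_le (by positivity)
  have hcast : ((⌊(M:ℝ)*a⌋₊ : ℕ) : ℝ) = ((⌊(M:ℝ)*b⌋₊ : ℕ) : ℝ) := by exact_mod_cast h
  have d1 : a - b < 1/(M:ℝ) := by rw [lt_div_iff₀ hMR]; nlinarith
  have d2 : b - a < 1/(M:ℝ) := by rw [lt_div_iff₀ hMR]; nlinarith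
  rw [abs_le]
  constructor <;> linarith

lemma clamp_lip (u x a b : ℝ) :
    |max u (min a x) - max u (min b x)| ≤ |a - b| := by
  have hmin : |min a x - min b x| ≤ |a - b| := by
    rw [abs_le]
    constructor
    · rcases min_cases a x with ⟨h1, h2⟩ | ⟨h1, h2⟩ <;> rw [h1] <;>
        [skip; skip] <;>
        cases' le_or_gt b x with h3 h3
      · rw [min_eq_left h3]; cases' abs_cases (a-b) with hc hc <;> linarith
      · rw [min_eq_right h3.le]; cases' abs_cases (a-b) with hc hc <;> linarith
      · rw [min_eq_left h3]; cases' abs_cases (a-b) with hc hc <;> linarith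
      · rw [min_eq_right h3.le]; cases' abs_cases (a-b) with hc hc <;> linarith
    · rcases min_cases b x with ⟨h1, h2⟩ | ⟨h1, h2⟩ <;> rw [h1]
      · linarith [min_le_left a x, le_abs_self (a-b)]
      · linarith [min_le_right a x, abs_nonneg (a-b)]
  rw [abs_le]
  have h1 := abs_le.mp hmin
  constructor
  · rcases max_cases u (min b x) with ⟨hm, _⟩ | ⟨hm, _⟩ <;> rw [hm]
    · have : u ≤ max u (min a x) := le_max_left _ _
      linarith [abs_nonneg (a - b)]
    · have : min b x - |a - b| ≤ min a x := by linarith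
      have h2 : min a x ≤ max u (min a x) := le_max_right _ _
      linarith
  · rcases max_cases u (min a x) with ⟨hm, _⟩ | ⟨hm, _⟩ <;> rw [hm]
    · have : u ≤ max u (min b x) := le_max_left _ _
      linarith [abs_nonneg (a - b)]
    · have : min a x ≤ min b x + |a - b| := by linarith
      have h2 : min b x ≤ max u (min b x) := le_max_right _ _
      linarith

lemma pointdiff {f g : ℝ → ℝ}
    (hcf : ConvexOn ℝ (Icc 0 1) f) (hmf : MonotoneOn f (Icc 0 1))
    (hlipf : ∀ a b : ℝ, 0 ≤ a → a < b → b < 1 → f b - f a ≤ b - a)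
    (hcg : ConvexOn ℝ (Icc 0 1) g) (hmg : MonotoneOn g (Icc 0 1))
    (hlipg : ∀ a b : ℝ, 0 ≤ a → a < b → b < 1 → g b - g a ≤ b - a)
    {N : ℕ} (hN : 2 ≤ N)
    (hval : ∀ k : ℕ, k ≤ N → |f ((k:ℝ)/N) - g ((k:ℝ)/N)| ≤ 1/(N:ℝ)^3)
    (htb : ∀ j : ℕ, j < N → |tb f (((j:ℕ)+1:ℝ)/N) - tb g (((j:ℕ)+1:ℝ)/N)| ≤ 1/(N:ℝ)^3) :
    ∀ t ∈ Icc (0:ℝ) 1, |f t - g t| ≤ 3/(N:ℝ)^2 := by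
  intro t ⟨ht0, ht1⟩
  have hNn : 0 < N := by omega
  have hNR : (0:ℝ) < N := by exact_mod_cast hNn
  have hNR1 : (1:ℝ) ≤ N := by exact_mod_cast hNn
  have hcube : 1/(N:ℝ)^3 ≤ 1/(N:ℝ)^2 :=
    one_div_le_one_div_of_le (by positivity) (by nlinarith)
  rcases eq_or_lt_of_le ht1 with rfl | ht1'
  · have := hval N le_rfl
    rw [div_self (ne_of_gt hNR)] at this
    calc |f 1 - g 1| ≤ 1/(N:ℝ)^3 := this
      _ ≤ 1/(N:ℝ)^2 := hcube
      _ ≤ 3/(N:ℝ)^2 := by gcongr; norm_num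
  · set k₀ := ⌊(N:ℝ)*t⌋₊ with hk₀def
    have hk₀ : k₀ < N := by
      rw [hk₀def, Nat.floor_lt (by positivity)]
      nlinarith
    set u := (k₀:ℝ)/N with hudef
    have hu0 : 0 ≤ u := by positivity
    have hut : u ≤ t := by
      rw [hudef, div_le_iff₀ hNR]
      have := Nat.floor_le (show (0:ℝ) ≤ (N:ℝ)*t by positivity)
      linarith [this]
    have htu : t - u ≤ 1/(N:ℝ) := by
      have h1 : (N:ℝ)*t < k₀ + 1 := Nat.lt_floor_add_one _
      have heq : u + 1/(N:ℝ) = ((k₀:ℝ)+1)/N := by rw [hudef]; field_simp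
      have h2 : t ≤ ((k₀:ℝ)+1)/N := by rw [le_div_iff₀ hNR]; nlinarith
      linarith
    have sf := star hcf hmf hlipf N (by omega) hu0 hut ht1'
    have sg := star hcg hmg hlipg N (by omega) hu0 hut ht1'
    set Sf := ∑ j ∈ Finset.range N, (t - max u (min (tb f (((j:ℕ)+1:ℝ)/N)) t)) with hSf
    set Sg := ∑ j ∈ Finset.range N, (t - max u (min (tb g (((j:ℕ)+1:ℝ)/N)) t)) with hSg
    have hSdiff : |Sf - Sg| ≤ (N:ℝ) * (1/(N:ℝ)^3) := by
      rw [hSf, hSg, ← Finset.sum_sub_distrib]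
      calc |∑ j ∈ Finset.range N, ((t - max u (min (tb f (((j:ℕ)+1:ℝ)/N)) t)) -
            (t - max u (min (tb g (((j:ℕ)+1:ℝ)/N)) t)))|
          ≤ ∑ j ∈ Finset.range N, |(t - max u (min (tb f (((j:ℕ)+1:ℝ)/N)) t)) -
            (t - max u (min (tb g (((j:ℕ)+1:ℝ)/N)) t))| := Finset.abs_sum_le_sum_abs _ _
        _ ≤ ∑ j ∈ Finset.range N, (1/(N:ℝ)^3) := by
            apply Finset.sum_le_sum
            intro j hj
            have e1 : (t - max u (min (tb f (((j:ℕ)+1:ℝ)/N)) t)) -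
                (t - max u (min (tb g (((j:ℕ)+1:ℝ)/N)) t))
                = max u (min (tb g (((j:ℕ)+1:ℝ)/N)) t) - max u (min (tb f (((j:ℕ)+1:ℝ)/N)) t) := by
              ring
            rw [e1]
            calc |max u (min (tb g (((j:ℕ)+1:ℝ)/N)) t) - max u (min (tb f (((j:ℕ)+1:ℝ)/N)) t)|
                ≤ |tb g (((j:ℕ)+1:ℝ)/N) - tb f (((j:ℕ)+1:ℝ)/N)| := clamp_lip _ _ _ _
              _ ≤ 1/(N:ℝ)^3 := by rw [abs_sub_comm]; exact htb j (Finset.mem_range.mp hj)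
        _ = (N:ℝ) * (1/(N:ℝ)^3) := by rw [Finset.sum_const, Finset.card_range, nsmul_eq_mul]
    have hfu : |f u - g u| ≤ 1/(N:ℝ)^3 := hval k₀ hk₀.le
    -- assemble
    obtain ⟨d1, d2⟩ := sf
    obtain ⟨d3, d4⟩ := sg
    obtain ⟨e1a, e1b⟩ := abs_le.mp hfu
    obtain ⟨e2a, e2b⟩ := abs_le.mp hSdiff
    have hcoef : (0:ℝ) ≤ 1/(N:ℝ) := by positivity
    have m1 : (1/(N:ℝ)) * (Sf - Sg) ≤ (1/(N:ℝ)) * ((N:ℝ) * (1/(N:ℝ)^3)) :=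
      mul_le_mul_of_nonneg_left e2b hcoef
    have m2 : (1/(N:ℝ)) * (-((N:ℝ) * (1/(N:ℝ)^3))) ≤ (1/(N:ℝ)) * (Sf - Sg) :=
      mul_le_mul_of_nonneg_left e2a hcoef
    have hsimp : (1/(N:ℝ)) * ((N:ℝ) * (1/(N:ℝ)^3)) = 1/(N:ℝ)^3 := by
      field_simp
    have htu2 : (t - u)/N ≤ 1/(N:ℝ)^2 := by
      rw [div_le_iff₀ hNR]
      have : 1/(N:ℝ)^2 * N = 1/N := by field_simp
      rw [this]
      exact htu
    have hmul : (1/(N:ℝ)) * Sf - (1/(N:ℝ)) * Sg = (1/(N:ℝ)) * (Sf - Sg) := by ring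
    rw [mul_neg, hsimp] at m2
    rw [hsimp] at m1
    have h3eq : (3:ℝ)/(N:ℝ)^2 = 1/(N:ℝ)^2 + 1/(N:ℝ)^2 + 1/(N:ℝ)^2 := by ring
    rw [abs_le]
    constructor
    · linarith
    · linarith

lemma dist_pt (x y : Pt 2) : dist x y = Real.sqrt ((x 0 - y 0)^2 + (x 1 - y 1)^2) := by
  rw [EuclideanSpace.dist_eq, Fin.sum_univ_two]
  simp only [Real.dist_eq, sq_abs]

lemma hdist_le {f g : ℝ → ℝ} {r : ℝ} (hr : 0 ≤ r)
    (h : ∀ t ∈ Icc (0:ℝ) 1, |f t - g t| ≤ r) :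
    Metric.hausdorffDist (curveGraph f (Icc 0 1)) (curveGraph g (Icc 0 1)) ≤ r := by
  apply Metric.hausdorffDist_le_of_mem_dist hr
  · rintro x ⟨t, ht, rfl⟩
    refine ⟨(fun s => (WithLp.toLp 2 ![s, g s] : Pt 2)) t, mem_image_of_mem _ ht, ?_⟩
    rw [dist_pt]
    simp only [PiLp.toLp_apply, Matrix.cons_val_zero, Matrix.cons_val_one, Matrix.head_cons]
    rw [sub_self, show ((0:ℝ))^2 + (f t - g t)^2 = (f t - g t)^2 by ring,
      Real.sqrt_sq_eq_abs]
    exact h t ht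
  · rintro y ⟨t, ht, rfl⟩
    refine ⟨(fun s => (WithLp.toLp 2 ![s, f s] : Pt 2)) t, mem_image_of_mem _ ht, ?_⟩
    rw [dist_pt]
    simp only [PiLp.toLp_apply, Matrix.cons_val_zero, Matrix.cons_val_one, Matrix.head_cons]
    rw [sub_self, show ((0:ℝ))^2 + (g t - f t)^2 = (g t - f t)^2 by ring,
      Real.sqrt_sq_eq_abs, abs_sub_comm]
    exact h t ht

theorem statement12' :
    ∃ C : ℝ, 0 < C ∧ ∀ N : ℕ, 2 ≤ N →
      ∃ m : ℕ, (m : ℝ) ≤ (N : ℝ) ^ (C * N) ∧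
        ∃ P : Set (Pt 2) → Fin m,
          ∀ γ₁ ∈ CPlus, ∀ γ₂ ∈ CPlus, P γ₁ = P γ₂ →
            Metric.hausdorffDist γ₁ γ₂ ≤ C / (N : ℝ) ^ 2 := by
  classical
  refine ⟨12, by norm_num, ?_⟩
  intro N hN
  have hNn : 0 < N := by omega
  have hNR : (0:ℝ) < N := by exact_mod_cast hNn
  set M := N^3 with hMdef
  have hMpos : 0 < M := by positivity
  refine ⟨Fintype.card ((Fin (N+1) → Fin (M+1)) × (Fin N → Fin (M+1))), ?_, ?_⟩
  · have hcard : Fintype.card ((Fin (N+1) → Fin (M+1)) × (Fin N → Fin (M+1)))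
        = (M+1)^(N+1) * (M+1)^N := by
      rw [Fintype.card_prod, Fintype.card_fun, Fintype.card_fun,
        Fintype.card_fin, Fintype.card_fin, Fintype.card_fin]
    have hM4 : M + 1 ≤ N^4 := by
      rw [hMdef]
      nlinarith [Nat.one_le_iff_ne_zero.mpr (by positivity : N^3 ≠ 0)]
    have h1 : Fintype.card ((Fin (N+1) → Fin (M+1)) × (Fin N → Fin (M+1))) ≤ N^(12*N) := by
      rw [hcard, ← pow_add]
      calc (M+1)^(N+1+N) ≤ (N^4)^(N+1+N) := Nat.pow_le_pow_left hM4 _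
        _ = N^(4*(N+1+N)) := by rw [← pow_mul]
        _ ≤ N^(12*N) := Nat.pow_le_pow_right hNn (by omega)
    have h2 : ((N:ℝ))^((12:ℝ)*N) = ((N^(12*N) : ℕ) : ℝ) := by
      push_cast
      rw [← Real.rpow_natCast (N:ℝ) (12*N)]
      push_cast
      ring_nf
    rw [h2]
    exact_mod_cast h1
  · set pick : Set (Pt 2) → (ℝ → ℝ) :=
      fun γ => if h : γ ∈ CPlus then h.choose else fun _ => 0 with hpick
    set code : Set (Pt 2) → ((Fin (N+1) → Fin (M+1)) × (Fin N → Fin (M+1))) :=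
      fun γ =>
        (fun k => ⟨min ⌊(M:ℝ) * pick γ (((k:ℕ):ℝ)/(N:ℝ))⌋₊ M,
            Nat.lt_succ_of_le (min_le_right _ _)⟩,
         fun j => ⟨min ⌊(M:ℝ) * tb (pick γ) ((((j:ℕ):ℝ)+1)/(N:ℝ))⌋₊ M,
            Nat.lt_succ_of_le (min_le_right _ _)⟩) with hcode
    refine ⟨fun γ => (Fintype.equivFin _) (code γ), ?_⟩
    intro γ₁ h₁ γ₂ h₂ hP
    have hcodeeq : code γ₁ = code γ₂ := (Fintype.equivFin _).injective hP
    have hp1 : pick γ₁ = h₁.choose := by rw [hpick]; exact dif_pos h₁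
    have hp2 : pick γ₂ = h₂.choose := by rw [hpick]; exact dif_pos h₂
    obtain ⟨hcf, hmf, hbf, hdf, hγ1⟩ := hp1 ▸ h₁.choose_spec
    obtain ⟨hcg, hmg, hbg, hdg, hγ2⟩ := hp2 ▸ h₂.choose_spec
    set f := pick γ₁
    set g := pick γ₂
    have hlipf := lip_of_deriv hcf hdf
    have hlipg := lip_of_deriv hcg hdg
    have hMR : ((M:ℕ):ℝ) = (N:ℝ)^3 := by rw [hMdef]; push_cast; ring
    have hval : ∀ k : ℕ, k ≤ N → |f ((k:ℝ)/N) - g ((k:ℝ)/N)| ≤ 1/(N:ℝ)^3 := by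
      intro k hk
      have hmem : ((k:ℝ)/N) ∈ Icc (0:ℝ) 1 := by
        constructor
        · positivity
        · rw [div_le_one hNR]; exact_mod_cast hk
      have hfm := hbf _ hmem
      have hgm := hbg _ hmem
      have hkeq := congrArg Fin.val (congrFun (congrArg Prod.fst hcodeeq) ⟨k, by omega⟩)
      simp only [hcode] at hkeq
      have := floor_close hMpos hfm.1 hfm.2 hgm.1 hgm.2 hkeq
      rwa [hMR] at this
    have htbc : ∀ j : ℕ, j < N → |tb f (((j:ℕ)+1:ℝ)/N) - tb g (((j:ℕ)+1:ℝ)/N)| ≤ 1/(N:ℝ)^3 := by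
      intro j hj
      have hjeq := congrArg Fin.val (congrFun (congrArg Prod.snd hcodeeq) ⟨j, hj⟩)
      simp only [hcode] at hjeq
      have := floor_close hMpos (tb_nonneg f _) (tb_le_one f _)
        (tb_nonneg g _) (tb_le_one g _) hjeq
      rwa [hMR] at this
    have key := pointdiff hcf hmf hlipf hcg hmg hlipg hN hval htbc
    rw [hγ1, hγ2]
    apply hdist_le (by positivity)
    intro t ht
    calc |f t - g t| ≤ 3/(N:ℝ)^2 := key t ht
      _ ≤ 12/(N:ℝ)^2 := by gcongr <;> norm_num

end St12


/-- Proposition 6.2 of the paper. -/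
theorem statement12 :
    ∃ C : ℝ, 0 < C ∧ ∀ N : ℕ, 2 ≤ N →
      ∃ m : ℕ, (m : ℝ) ≤ (N : ℝ) ^ (C * N) ∧
        ∃ P : Set (Pt 2) → Fin m,
          ∀ γ₁ ∈ CPlus, ∀ γ₂ ∈ CPlus, P γ₁ = P γ₂ →
            Metric.hausdorffDist γ₁ γ₂ ≤ C / (N : ℝ) ^ 2 :=
  St12.statement12'
end
end

section
/- Let d ≥ 2 and let 1 ≤ k ≤ d−1 be an integer. Every set E ⊂ ℝ^d whose Hausdorff dimension is strictly less than d−k is G(d,k)-tube null. -/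
open MeasureTheory Metric Set
open scoped ENNReal NNReal

noncomputable section

/-- `L` is an affine `k`-plane in `ℝ^d`. -/
def IsAffinePlane (d k : ℕ) (L : Set (Pt d)) : Prop :=
  ∃ V : AffineSubspace ℝ (Pt d), (V : Set (Pt d)).Nonempty ∧
    Module.finrank ℝ V.direction = k ∧ L = (V : Set (Pt d))

/-- A `G(d,k)`-tube of width `w`. -/
def IsGTube (d k : ℕ) (w : ℝ) (T : Set (Pt d)) : Prop :=
  ∃ L : Set (Pt d), IsAffinePlane d k L ∧ T = Metric.cthickening w L

/-- `A` is `G(d,k)`-tube null. -/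
def GTubeNull (d k : ℕ) (A : Set (Pt d)) : Prop :=
  ∀ δ : ℝ, 0 < δ → ∃ (T : ℕ → Set (Pt d)) (w : ℕ → ℝ),
    (∀ n, 0 < w n ∧ IsGTube d k (w n) (T n)) ∧ (A ⊆ ⋃ n, T n) ∧
    ∑' n, ENNReal.ofReal (w n) ^ (d - k) ≤ ENNReal.ofReal δ

lemma exists_plane (d k : ℕ) (hkd : k ≤ d) (x : Pt d) :
    ∃ V : AffineSubspace ℝ (Pt d), x ∈ V ∧ (V : Set (Pt d)).Nonempty ∧
      Module.finrank ℝ V.direction = k := by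
  set f : Fin k → Pt d := fun i => EuclideanSpace.basisFun (Fin d) ℝ (Fin.castLE hkd i)
  have hli : LinearIndependent ℝ f :=
    (EuclideanSpace.basisFun (Fin d) ℝ).toBasis.linearIndependent.comp _
      (Fin.castLE_injective hkd)
  refine ⟨AffineSubspace.mk' x (Submodule.span ℝ (Set.range f)),
    AffineSubspace.self_mem_mk' _ _, ⟨x, AffineSubspace.self_mem_mk' _ _⟩, ?_⟩
  rw [AffineSubspace.direction_mk', finrank_span_eq_card hli]
  simp

theorem statement18 (d k : ℕ) (hd : 2 ≤ d) (hk1 : 1 ≤ k) (hk2 : k ≤ d - 1)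
    (E : Set (Pt d)) (hE : dimH E < (d : ℝ≥0∞) - k) :
    GTubeNull d k E := by
  intro δ hδ
  have hkd : k ≤ d := hk2.trans (Nat.sub_le d 1)
  set m : ℕ := d - k with hm
  have hm1 : 1 ≤ m := Nat.le_sub_of_add_le (by omega)
  -- Hausdorff measure of E in dimension m is 0
  have hcast : ((m : ℝ≥0∞)) = (d : ℝ≥0∞) - k := by
    rw [hm]; exact ENNReal.natCast_sub d k
  have hμ : μH[(m : ℝ)] E = 0 := by
    have := hausdorffMeasure_of_dimH_lt (s := E) (d := (m : ℝ≥0)) (by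
      rw [show ((m : ℝ≥0) : ℝ≥0∞) = (m : ℝ≥0∞) by simp, hcast]; exact hE)
    simpa using this
  -- extract a cover
  have happ := Measure.hausdorffMeasure_apply (m : ℝ) E
  rw [hμ] at happ
  have hinf : (⨅ (t : ℕ → Set (Pt d)) (_ : E ⊆ ⋃ n, t n) (_ : ∀ n, EMetric.diam (t n) ≤ 1),
      ∑' n, ⨆ _ : (t n).Nonempty, EMetric.diam (t n) ^ (m : ℝ)) = 0 := by
    refine le_antisymm ?_ zero_le
    rw [happ]
    exact le_iSup₂ (f := fun r (_ : 0 < r) => ⨅ (t : ℕ → Set (Pt d)) (_ : E ⊆ ⋃ n, t n)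
      (_ : ∀ n, EMetric.diam (t n) ≤ r), ∑' n, ⨆ _ : (t n).Nonempty,
        EMetric.diam (t n) ^ (m : ℝ)) 1 zero_lt_one
  have hδ2 : (0 : ℝ≥0∞) < ENNReal.ofReal (δ/2) := by
    simp [ENNReal.ofReal_pos]; linarith
  obtain ⟨t, ht⟩ : ∃ t : ℕ → Set (Pt d), (E ⊆ ⋃ n, t n) ∧ (∀ n, EMetric.diam (t n) ≤ 1) ∧
      ∑' n, ⨆ _ : (t n).Nonempty, EMetric.diam (t n) ^ (m : ℝ) < ENNReal.ofReal (δ/2) := by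
    rw [← hinf] at hδ2
    simp only [iInf_lt_iff] at hδ2
    obtain ⟨t, h1, h2, h3⟩ := hδ2
    exact ⟨t, h1, h2, h3⟩
  obtain ⟨htcov, htdiam, htsum⟩ := ht
  -- widths
  set ε : ℝ := min (δ/4) 1 with hε
  have hε0 : 0 < ε := by positivity
  have hε1 : ε ≤ 1 := min_le_right _ _
  set w : ℕ → ℝ := fun n => max (EMetric.diam (t n)).toReal (ε * (2:ℝ)⁻¹ ^ n) with hw
  have hw0 : ∀ n, 0 < w n := fun n =>
    lt_max_of_lt_right (by positivity)
  -- centers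
  have hpick : ∀ n, ∃ x : Pt d, (t n).Nonempty → x ∈ t n := by
    intro n
    by_cases h : (t n).Nonempty
    · exact ⟨h.choose, fun _ => h.choose_spec⟩
    · exact ⟨0, fun h' => absurd h' h⟩
  choose x hx using hpick
  have hplane := fun n => exists_plane d k hkd (x n)
  choose V hxV hVne hVrank using hplane
  refine ⟨fun n => Metric.cthickening (w n) (V n : Set (Pt d)), w, ?_, ?_, ?_⟩
  · exact fun n => ⟨hw0 n, (V n : Set (Pt d)), ⟨V n, hVne n, hVrank n, rfl⟩, rfl⟩
  · refine htcov.trans (Set.iUnion_mono fun n => ?_)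
    intro y hy
    have hne : (t n).Nonempty := ⟨y, hy⟩
    have hfin : EMetric.diam (t n) ≠ ⊤ :=
      ((htdiam n).trans_lt ENNReal.one_lt_top).ne
    have hdy : dist y (x n) ≤ (EMetric.diam (t n)).toReal := by
      rw [dist_edist]
      exact ENNReal.toReal_mono hfin (EMetric.edist_le_diam_of_mem hy (hx n hne))
    exact Metric.closedBall_subset_cthickening (hxV n) (w n)
      (Metric.mem_closedBall.2 (hdy.trans (le_max_left _ _)))
  · -- sum bound
    have key : ∀ n, ENNReal.ofReal (w n) ^ m ≤
        (⨆ _ : (t n).Nonempty, EMetric.diam (t n) ^ (m : ℝ)) +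
          ENNReal.ofReal ε * (2:ℝ≥0∞)⁻¹ ^ n := by
      intro n
      have : ENNReal.ofReal (w n) ^ m ≤
          ENNReal.ofReal (EMetric.diam (t n)).toReal ^ m +
            ENNReal.ofReal (ε * (2:ℝ)⁻¹ ^ n) ^ m := by
        rcases max_cases (EMetric.diam (t n)).toReal (ε * (2:ℝ)⁻¹ ^ n) with ⟨h1, _⟩ | ⟨h1, _⟩ <;>
          rw [hw] <;> simp only [h1] <;> [exact le_add_right le_rfl; exact le_add_left le_rfl]
      refine this.trans (add_le_add ?_ ?_)
      · rcases eq_empty_or_nonempty (t n) with h | h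
        · have : m ≠ 0 := by omega
          simp [h, this, EMetric.diam]
        · rw [iSup_pos h, ENNReal.ofReal_toReal
            (((htdiam n).trans_lt ENNReal.one_lt_top).ne), ← ENNReal.rpow_natCast]
      · have h2n : (2:ℝ)⁻¹ ^ n ≤ 1 := by
          apply pow_le_one₀ <;> norm_num
        have hle1 : ENNReal.ofReal (ε * (2:ℝ)⁻¹ ^ n) ≤ 1 := by
          rw [ENNReal.ofReal_le_one]
          calc ε * (2:ℝ)⁻¹ ^ n ≤ 1 * 1 := by
                apply mul_le_mul hε1 h2n (by positivity) (by norm_num)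
            _ = 1 := by norm_num
        calc ENNReal.ofReal (ε * (2:ℝ)⁻¹ ^ n) ^ m
            ≤ ENNReal.ofReal (ε * (2:ℝ)⁻¹ ^ n) ^ 1 :=
              pow_le_pow_of_le_one zero_le hle1 hm1
          _ = ENNReal.ofReal ε * (2:ℝ≥0∞)⁻¹ ^ n := by
              rw [pow_one, ENNReal.ofReal_mul hε0.le, ENNReal.ofReal_pow (by norm_num)]
              congr 2
              rw [ENNReal.ofReal_inv_of_pos (by norm_num)]
              norm_num
    calc ∑' n, ENNReal.ofReal (w n) ^ m
        ≤ ∑' n, ((⨆ _ : (t n).Nonempty, EMetric.diam (t n) ^ (m : ℝ)) +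
            ENNReal.ofReal ε * (2:ℝ≥0∞)⁻¹ ^ n) := ENNReal.tsum_le_tsum key
      _ = (∑' n, ⨆ _ : (t n).Nonempty, EMetric.diam (t n) ^ (m : ℝ)) +
            ENNReal.ofReal ε * ∑' n : ℕ, (2:ℝ≥0∞)⁻¹ ^ n := by
          rw [ENNReal.tsum_add, ENNReal.tsum_mul_left]
      _ ≤ ENNReal.ofReal (δ/2) + ENNReal.ofReal ε * 2 := by
          have hgeo : ∑' n : ℕ, (2:ℝ≥0∞)⁻¹ ^ n = 2 := by
            rw [ENNReal.tsum_geometric, show ((1:ℝ≥0∞) - 2⁻¹) = 2⁻¹ by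
              rw [ENNReal.one_sub_inv_two], inv_inv]
          rw [hgeo]
          exact add_le_add htsum.le le_rfl
      _ ≤ ENNReal.ofReal δ := by
          rw [show (2:ℝ≥0∞) = ENNReal.ofReal 2 by norm_num,
            ← ENNReal.ofReal_mul hε0.le, ← ENNReal.ofReal_add (by linarith) (by positivity)]
          apply ENNReal.ofReal_le_ofReal
          have : ε * 2 ≤ δ/2 := by
            have : ε ≤ δ/4 := min_le_left _ _
            linarith
          linarith
end
end
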